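/- Let F be a suc-stable fragment whose quantifier depth is bounded by n ∈ ℕ, and let u, v be countable words. If Duplicator has a winning strategy in the F-game on (u, v), then for every m ≥ 2^{n+1} − 1, Duplicator has a winning strategy in the F-game on (u^m, v^ρ) and in the F-game on (u^ρ, v^m). -/

import Mathlib

set_option autoImplicit false

instance instCountableLex {α : Type*} [Countable α] : Countable (Lex α) :=
  inferInstanceAs (Countable α)

namespace EFGames

/-! ### Syntax of first-order logic over words.
Letters of the alphabet `Λ` and first-order variables are represented by natural numbers. -/

inductive FOForm : Type where
  | top | bot | empt
  | eq (x y : ℕ) | lab (x a : ℕ)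
  | lt (x y : ℕ) | le (x y : ℕ) | suc (x y : ℕ)
  | fmin (x : ℕ) | fmax (x : ℕ)
  | not (φ : FOForm) | or (φ ψ : FOForm) | and (φ ψ : FOForm)
  | ex (x : ℕ) (φ : FOForm) | all (x : ℕ) (φ : FOForm)

/-- Free variables of a formula. -/
def FOForm.FV : FOForm → Finset ℕ
  | .top | .bot | .empt => ∅
  | .eq x y | .lt x y | .le x y | .suc x y => {x, y}
  | .lab x _ | .fmin x | .fmax x => {x}
  | .not φ => φ.FV
  | .or φ ψ | .and φ ψ => φ.FV ∪ ψ.FV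
  | .ex x φ | .all x φ => φ.FV.erase x

/-- Quantifier depth. -/
def FOForm.qd : FOForm → ℕ
  | .not φ => φ.qd
  | .or φ ψ | .and φ ψ => max φ.qd ψ.qd
  | .ex _ φ | .all _ φ => φ.qd + 1
  | _ => 0

/-- All variables occurring in a formula (free or bound). -/
def FOForm.vars : FOForm → Finset ℕ
  | .top | .bot | .empt => ∅
  | .eq x y | .lt x y | .le x y | .suc x y => {x, y}
  | .lab x _ | .fmin x | .fmax x => {x}
  | .not φ => φ.vars
  | .or φ ψ | .and φ ψ => φ.vars ∪ ψ.vars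
  | .ex x φ | .all x φ => insert x φ.vars

/-- The formula contains none of the predicates `suc`, `min`, `max`, `empty`. -/
def FOForm.NoSMME : FOForm → Prop
  | .empt | .suc _ _ | .fmin _ | .fmax _ => False
  | .not φ => φ.NoSMME
  | .or φ ψ | .and φ ψ => φ.NoSMME ∧ ψ.NoSMME
  | .ex _ φ | .all _ φ => φ.NoSMME
  | _ => True

/-- The formula contains the predicate `≤` or `<`. -/
def FOForm.HasOrder : FOForm → Prop
  | .lt _ _ | .le _ _ => True
  | .not φ => φ.HasOrder
  | .or φ ψ | .and φ ψ => φ.HasOrder ∨ ψ.HasOrder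
  | .ex _ φ | .all _ φ => φ.HasOrder
  | _ => False

/-- The formula contains one of the predicates `suc`, `min`, `max`, `empty`. -/
def FOForm.HasSMME : FOForm → Prop
  | .empt | .suc _ _ | .fmin _ | .fmax _ => True
  | .not φ => φ.HasSMME
  | .or φ ψ | .and φ ψ => φ.HasSMME ∨ ψ.HasSMME
  | .ex _ φ | .all _ φ => φ.HasSMME
  | _ => False

def FOForm.IsAtomic : FOForm → Prop
  | .top | .bot | .empt | .eq _ _ | .lab _ _ | .lt _ _ | .le _ _
  | .suc _ _ | .fmin _ | .fmax _ => True
  | _ => False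

/-- A literal is an atomic formula or a negated atomic formula. -/
def FOForm.IsLiteral (φ : FOForm) : Prop :=
  φ.IsAtomic ∨ ∃ ψ : FOForm, ψ.IsAtomic ∧ φ = .not ψ

/-- A sentence is a formula without free variables. -/
def FOForm.IsSentence (φ : FOForm) : Prop := φ.FV = ∅

/-- Contexts: formulas with exactly one occurrence of a placeholder `∘`. -/
inductive FOCtx : Type where
  | hole
  | notC (μ : FOCtx)
  | orL (μ : FOCtx) (ψ : FOForm)
  | orR (φ : FOForm) (μ : FOCtx)
  | andL (μ : FOCtx) (ψ : FOForm)
  | andR (φ : FOForm) (μ : FOCtx)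
  | exC (x : ℕ) (μ : FOCtx)
  | allC (x : ℕ) (μ : FOCtx)

/-- Substituting a formula for the placeholder of a context. -/
def FOCtx.subst : FOCtx → FOForm → FOForm
  | .hole, φ => φ
  | .notC μ, φ => .not (μ.subst φ)
  | .orL μ ψ, φ => .or (μ.subst φ) ψ
  | .orR χ μ, φ => .or χ (μ.subst φ)
  | .andL μ ψ, φ => .and (μ.subst φ) ψ
  | .andR χ μ, φ => .and χ (μ.subst φ)
  | .exC x μ, φ => .ex x (μ.subst φ)
  | .allC x μ, φ => .all x (μ.subst φ)

/-- A fragment: a nonempty set of formulas satisfying the syntactic closure properties. -/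
structure IsFragment (F : Set FOForm) : Prop where
  nonempty : F.Nonempty
  top_mem : ∀ (μ : FOCtx) (φ : FOForm), μ.subst φ ∈ F → μ.subst .top ∈ F
  bot_mem : ∀ (μ : FOCtx) (φ : FOForm), μ.subst φ ∈ F → μ.subst .bot ∈ F
  lab_mem : ∀ (μ : FOCtx) (φ : FOForm) (x a : ℕ), μ.subst φ ∈ F → μ.subst (.lab x a) ∈ F
  or_mem : ∀ (μ : FOCtx) (φ ψ : FOForm),
    μ.subst (.or φ ψ) ∈ F ↔ μ.subst φ ∈ F ∧ μ.subst ψ ∈ F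
  and_mem : ∀ (μ : FOCtx) (φ ψ : FOForm),
    μ.subst (.and φ ψ) ∈ F ↔ μ.subst φ ∈ F ∧ μ.subst ψ ∈ F
  negneg : ∀ (μ : FOCtx) (φ : FOForm), μ.subst (.not (.not φ)) ∈ F → μ.subst φ ∈ F
  ex_drop : ∀ (μ : FOCtx) (φ : FOForm) (x : ℕ),
    μ.subst (.ex x φ) ∈ F → x ∉ φ.FV → μ.subst φ ∈ F
  all_drop : ∀ (μ : FOCtx) (φ : FOForm) (x : ℕ),
    μ.subst (.all x φ) ∈ F → x ∉ φ.FV → μ.subst φ ∈ F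

/-- A fragment is order-stable if `μ(x<y) ∈ F ↔ μ(x≤y) ∈ F`. -/
def OrderStable (F : Set FOForm) : Prop :=
  ∀ (μ : FOCtx) (x y : ℕ), μ.subst (.lt x y) ∈ F ↔ μ.subst (.le x y) ∈ F

/-- A fragment is suc-stable if it satisfies the two closure conditions for `suc`, `min`, `max`, `empty`. -/
def SucStable (F : Set FOForm) : Prop :=
  (∀ (μ : FOCtx) (x y : ℕ), μ.subst (.suc x y) ∈ F →
      μ.subst (.eq x y) ∈ F ∧ μ.subst (.fmax x) ∈ F ∧ μ.subst (.fmin y) ∈ F) ∧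
  (∀ (μ : FOCtx) (x : ℕ), (μ.subst (.fmin x) ∈ F ∨ μ.subst (.fmax x) ∈ F) →
      μ.subst .empt ∈ F)

/-- The fragment has quantifier depth bounded by `n`. -/
def QDBoundedBy (F : Set FOForm) (n : ℕ) : Prop := ∀ φ ∈ F, φ.qd ≤ n

/-- Quantifiers, including the negated quantifiers. -/
inductive Quant : Type | qex | qall | qnex | qnall

def Quant.apply : Quant → ℕ → FOForm → FOForm
  | .qex, x, φ => .ex x φ
  | .qall, x, φ => .all x φ
  | .qnex, x, φ => .not (.ex x φ)
  | .qnall, x, φ => .not (.all x φ)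

/-- The reduct `Qx⁻¹F` of a set of formulas. -/
def reduct (Q : Quant) (x : ℕ) (F : Set FOForm) : Set FOForm := {φ | Q.apply x φ ∈ F}
/-! ### Generalized words -/

/-- A (countable) generalized word over the alphabet `ℕ`: a countable linear order
labeled by letters. Words are compared up to label-preserving order isomorphism
(`GWord.Iso`). -/
structure GWord : Type 1 where
  carrier : Type
  ord : LinearOrder carrier
  cnt : Countable carrier
  label : carrier → ℕ

attribute [instance] GWord.ord GWord.cnt

/-- Label-preserving order isomorphism of generalized words. -/
def GWord.Iso (u v : GWord) : Prop :=
  ∃ f : u.carrier ≃o v.carrier, ∀ p : u.carrier, v.label (f p) = u.label p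

/-- Satisfaction of a formula in a word under a (partial) valuation of the variables. -/
def GWord.Sat (u : GWord) : (ℕ → Option u.carrier) → FOForm → Prop
  | _, .top => True
  | _, .bot => False
  | _, .empt => IsEmpty u.carrier
  | α, .eq x y => ∃ p q : u.carrier, α x = some p ∧ α y = some q ∧ p = q
  | α, .lab x a => ∃ p : u.carrier, α x = some p ∧ u.label p = a
  | α, .lt x y => ∃ p q : u.carrier, α x = some p ∧ α y = some q ∧ p < q
  | α, .le x y => ∃ p q : u.carrier, α x = some p ∧ α y = some q ∧ p ≤ q
  | α, .suc x y => ∃ p q : u.carrier, α x = some p ∧ α y = some q ∧ p < q ∧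
      ∀ r : u.carrier, ¬ (p < r ∧ r < q)
  | α, .fmin x => ∃ p : u.carrier, α x = some p ∧ ∀ q : u.carrier, p ≤ q
  | α, .fmax x => ∃ p : u.carrier, α x = some p ∧ ∀ q : u.carrier, q ≤ p
  | α, .not φ => ¬ u.Sat α φ
  | α, .or φ ψ => u.Sat α φ ∨ u.Sat α ψ
  | α, .and φ ψ => u.Sat α φ ∧ u.Sat α ψ
  | α, .ex x φ => ∃ p : u.carrier, u.Sat (fun y => if y = x then some p else α y) φ
  | α, .all x φ => ∀ p : u.carrier, u.Sat (fun y => if y = x then some p else α y) φ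

/-- The empty valuation. -/
def emptyVal (u : GWord) : ℕ → Option u.carrier := fun _ => none

/-- A word satisfies a sentence. -/
def SatS (u : GWord) (φ : FOForm) : Prop := u.Sat (emptyVal u) φ

/-- Updating a valuation at a variable. -/
def updVal {u : GWord} (α : ℕ → Option u.carrier) (x : ℕ) (p : u.carrier) :
    ℕ → Option u.carrier :=
  fun y => if y = x then some p else α y

/-- The domain of the valuation `α` is exactly the finite set `V`. -/
def ValDom {u : GWord} (α : ℕ → Option u.carrier) (V : Finset ℕ) : Prop :=
  ∀ x : ℕ, (α x).isSome ↔ x ∈ V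

/-- A finite word, regarded as a generalized word. -/
def listToGWord (w : List ℕ) : GWord :=
  ⟨Fin w.length, inferInstance, inferInstance, w.get⟩

/-- Concatenation of generalized words. -/
def GWord.concat (u v : GWord) : GWord :=
  ⟨u.carrier ⊕ₗ v.carrier, inferInstance, inferInstance,
    fun p => Sum.elim u.label v.label (ofLex p)⟩

/-- The `τ`-power of a word, where `τ` is the order type of the countable linear order `T`:
positions are pairs `(t, p)` ordered with the `T`-component dominant. -/
def GWord.pow (u : GWord) (T : Type) [LinearOrder T] [Countable T] : GWord :=
  ⟨T ×ₗ u.carrier, inferInstance, inferInstance, fun p => u.label (ofLex p).2⟩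

/-- An index type of order type `ρ = ω + ζ·η + ω*`: a copy of `ℕ`, followed by `ℤ × ℚ`
ordered lexicographically with the `ℚ`-component dominant, followed by the negative
integers (the order dual of `ℕ`). -/
abbrev Rho : Type := (ℕ ⊕ₗ (ℚ ×ₗ ℤ)) ⊕ₗ ℕᵒᵈ

/-- ρ-rational words: built from finite words by concatenation and ρ-power
(closed under isomorphism, since words are identified up to isomorphism). -/
inductive RhoRational : GWord → Prop where
  | fin (w : List ℕ) : RhoRational (listToGWord w)
  | concat {u v : GWord} : RhoRational u → RhoRational v → RhoRational (u.concat v)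
  | rpow {u : GWord} : RhoRational u → RhoRational (u.pow Rho)
  | iso {u v : GWord} : RhoRational u → GWord.Iso u v → RhoRational v
/-! ### The `F`-game -/

/-- A configuration of the `F`-game: a set of formulas (an iterated reduct of the
original fragment) together with two valuations on two words. -/
structure Config : Type 1 where
  frag : Set FOForm
  w1 : GWord
  w2 : GWord
  val1 : ℕ → Option w1.carrier
  val2 : ℕ → Option w2.carrier

/-- Spoiler's winning condition: the configuration contains a literal with free variables
inside the valuation domain, satisfied in the first valuation but not in the second. -/
def SpoilerWinsNow (C : Config) : Prop :=
  ∃ φ ∈ C.frag, φ.IsLiteral ∧ (∀ y ∈ φ.FV, (C.val1 y).isSome) ∧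
    C.w1.Sat C.val1 φ ∧ ¬ C.w2.Sat C.val2 φ

/-- A set of configurations is a (Duplicator-)safe invariant: no configuration in it is
immediately winning for Spoiler, and for every move of Spoiler (a quantifier `Q`, a
variable `x` with nonempty reduct, and a quest `q` in the appropriate word) Duplicator
has a reply `r` leading back into the set (the valuations are swapped for negated
quantifiers). -/
def SafeInv (Good : Set Config) : Prop :=
  ∀ D ∈ Good,
    (¬ SpoilerWinsNow D) ∧
    (∀ x : ℕ, (reduct .qex x D.frag).Nonempty →
      ∀ q : D.w1.carrier, ∃ r : D.w2.carrier,
        (⟨reduct .qex x D.frag, D.w1, D.w2, updVal D.val1 x q, updVal D.val2 x r⟩ : Config) ∈ Good) ∧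
    (∀ x : ℕ, (reduct .qall x D.frag).Nonempty →
      ∀ q : D.w2.carrier, ∃ r : D.w1.carrier,
        (⟨reduct .qall x D.frag, D.w1, D.w2, updVal D.val1 x r, updVal D.val2 x q⟩ : Config) ∈ Good) ∧
    (∀ x : ℕ, (reduct .qnex x D.frag).Nonempty →
      ∀ q : D.w2.carrier, ∃ r : D.w1.carrier,
        (⟨reduct .qnex x D.frag, D.w2, D.w1, updVal D.val2 x q, updVal D.val1 x r⟩ : Config) ∈ Good) ∧
    (∀ x : ℕ, (reduct .qnall x D.frag).Nonempty →
      ∀ q : D.w1.carrier, ∃ r : D.w2.carrier,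
        (⟨reduct .qnall x D.frag, D.w2, D.w1, updVal D.val2 x r, updVal D.val1 x q⟩ : Config) ∈ Good)

/-- Duplicator has a winning strategy from a configuration of this (possibly infinite)
safety game iff some safe invariant contains the configuration. -/
def DuplicatorWins (C : Config) : Prop :=
  ∃ Good : Set Config, C ∈ Good ∧ SafeInv Good

/-- Duplicator has a winning strategy in the `F`-game on `(u, v)` (from the initial
configuration with empty valuations). -/
def DuplicatorWinsGame (F : Set FOForm) (u v : GWord) : Prop :=
  DuplicatorWins ⟨F, u, v, fun _ => none, fun _ => none⟩

/-- Spoiler has a winning strategy: either the current configuration is already winning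
for Spoiler, or Spoiler has a move such that every reply of Duplicator (in particular,
no possible reply) leads to a configuration where Spoiler wins. -/
inductive SpoilerWins : Config → Prop where
  | now {C : Config} : SpoilerWinsNow C → SpoilerWins C
  | mex {C : Config} (x : ℕ) (h : (reduct .qex x C.frag).Nonempty) (q : C.w1.carrier)
      (h2 : ∀ r : C.w2.carrier, SpoilerWins
        ⟨reduct .qex x C.frag, C.w1, C.w2, updVal C.val1 x q, updVal C.val2 x r⟩) :
      SpoilerWins C

/-! ### π-terms and their interpretations -/

/-- π-terms over the alphabet `ℕ` (elements of the free π-algebra). -/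
inductive PiTerm : Type where
  | letter (a : ℕ)
  | mul (s t : PiTerm)
  | pi (s : PiTerm)

/-- The interpretation `⟦·⟧_ρ` of π-terms as generalized words: letters become
single-position words, products concatenations, and the π-power the ρ-power. -/
def PiTerm.evalRho : PiTerm → GWord
  | .letter a => listToGWord [a]
  | .mul s t => s.evalRho.concat t.evalRho
  | .pi s => s.evalRho.pow Rho

/-- The interpretation `⟦·⟧_m` of π-terms as finite words: the π-power becomes
the `m`-fold concatenation power. -/
def PiTerm.evalFin (m : ℕ) : PiTerm → GWord
  | .letter a => listToGWord [a]
  | .mul s t => (s.evalFin m).concat (t.evalFin m)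
  | .pi s => (s.evalFin m).pow (Fin m)

/-- `mpow u k = u^(k+1)`: positive powers in any semigroup (or magma). -/
def mpow {M : Type} [Mul M] (u : M) : ℕ → M
  | 0 => u
  | k+1 => mpow u k * u

/-- `k+1` is an idempotency exponent of `M`: `u^(k+1)` is idempotent for every `u`. -/
def IsIdemExpnt (M : Type) [Mul M] (k : ℕ) : Prop :=
  ∀ u : M, mpow u k * mpow u k = mpow u k

/-- Evaluation of a π-term in `M` under a letter assignment `h`, interpreting the
π-power as the `(k+1)`-st power. -/
def PiTerm.evalMul {M : Type} [Mul M] (h : ℕ → M) (k : ℕ) : PiTerm → M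
  | .letter a => h a
  | .mul s t => (s.evalMul h k) * (t.evalMul h k)
  | .pi s => mpow (s.evalMul h k) k

/-- The identity `s = t` of π-terms holds in `M`: for every assignment of the letters and
every idempotency exponent (i.e. interpreting `(·)^π` as the idempotent power), the two
terms evaluate equally. -/
def PiIdentityHolds (M : Type) [Mul M] (s t : PiTerm) : Prop :=
  ∀ (h : ℕ → M) (k : ℕ), IsIdemExpnt M k → s.evalMul h k = t.evalMul h k

/-! ### Languages, definability and syntactic monoids/semigroups -/

/-- All letters of the finite word `w` belong to the alphabet `A`. -/
def InAlph (A : Finset ℕ) (w : FreeMonoid ℕ) : Prop :=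
  ∀ a ∈ FreeMonoid.toList w, a ∈ A

/-- A finite word, regarded as a generalized word. -/
def wordToGWord (w : FreeMonoid ℕ) : GWord := listToGWord (FreeMonoid.toList w)

/-- The submonoid `A* ⊆ Λ*` of words over the finite alphabet `A`. -/
def wordsOver (A : Finset ℕ) : Submonoid (FreeMonoid ℕ) where
  carrier := {w | InAlph A w}
  mul_mem' := by
    intro u v hu hv a ha
    rw [FreeMonoid.toList_mul] at ha
    rcases List.mem_append.mp ha with h | h
    exacts [hu a h, hv a h]
  one_mem' := by
    intro a ha
    simp [FreeMonoid.toList_one] at ha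

/-- The single-letter word `a ∈ A*`. -/
def letterWord (A : Finset ℕ) (a : ℕ) (ha : a ∈ A) : ↥(wordsOver A) :=
  ⟨FreeMonoid.of a, by
    intro b hb
    rw [FreeMonoid.toList_of] at hb
    rcases List.mem_singleton.mp hb with rfl
    exact ha⟩

/-- The language over `A` defined by the sentence `φ`. -/
def LangOf (A : Finset ℕ) (φ : FOForm) : Set (FreeMonoid ℕ) :=
  {w | InAlph A w ∧ SatS (wordToGWord w) φ}

/-- `L ⊆ A*` is definable in `F` over the alphabet `A`. -/
def DefinableIn (F : Set FOForm) (A : Finset ℕ) (L : Set (FreeMonoid ℕ)) : Prop :=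
  ∃ φ ∈ F, φ.IsSentence ∧ L = LangOf A φ

/-- The syntactic congruence of `L` on `A*`: `u ≡_L v` iff `xuy ∈ L ⇔ xvy ∈ L` for all
contexts `x, y ∈ A*`. -/
def synCon (A : Finset ℕ) (L : Set (FreeMonoid ℕ)) : Con ↥(wordsOver A) where
  r u v := ∀ x y : FreeMonoid ℕ, InAlph A x → InAlph A y →
    ((x * ↑u * y ∈ L) ↔ (x * ↑v * y ∈ L))
  iseqv := ⟨fun _ _ _ _ _ => Iff.rfl,
    fun h x y hx hy => (h x y hx hy).symm,
    fun h1 h2 x y hx hy => (h1 x y hx hy).trans (h2 x y hx hy)⟩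
  mul' := by
    intro w x y z h1 h2 a b ha hb
    have hyb : InAlph A ((y : FreeMonoid ℕ) * b) := by
      intro c hc
      rw [FreeMonoid.toList_mul] at hc
      rcases List.mem_append.mp hc with h | h
      exacts [y.2 c h, hb c h]
    have hax : InAlph A (a * (x : FreeMonoid ℕ)) := by
      intro c hc
      rw [FreeMonoid.toList_mul] at hc
      rcases List.mem_append.mp hc with h | h
      exacts [ha c h, x.2 c h]
    have e1 : a * ↑(w * y) * b = a * (w : FreeMonoid ℕ) * (↑y * b) := by
      push_cast; simp [mul_assoc]
    have e2 : a * (x : FreeMonoid ℕ) * (↑y * b) = (a * ↑x) * ↑y * b := by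
      simp [mul_assoc]
    have e3 : (a * (x : FreeMonoid ℕ)) * ↑z * b = a * ↑(x * z) * b := by
      push_cast; simp [mul_assoc]
    rw [e1, h1 a (↑y * b) ha hyb, e2, h2 (a * ↑x) b hax hb, e3]

/-- The syntactic monoid `M_L = A*/≡_L`. -/
def SynMonoid (A : Finset ℕ) (L : Set (FreeMonoid ℕ)) : Type := (synCon A L).Quotient

instance (A : Finset ℕ) (L : Set (FreeMonoid ℕ)) : Monoid (SynMonoid A L) :=
  inferInstanceAs (Monoid (synCon A L).Quotient)

/-- The subsemigroup `A⁺ ⊆ Λ*` of nonempty words over the finite alphabet `A`. -/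
def plusWordsOver (A : Finset ℕ) : Subsemigroup (FreeMonoid ℕ) where
  carrier := {w | w ≠ 1 ∧ InAlph A w}
  mul_mem' := by
    intro u v hu hv
    refine ⟨?_, ?_⟩
    · intro h
      apply hu.1
      have : FreeMonoid.toList (u * v) = FreeMonoid.toList (1 : FreeMonoid ℕ) := by rw [h]
      rw [FreeMonoid.toList_mul, FreeMonoid.toList_one] at this
      exact (List.append_eq_nil_iff.mp this).1
    · intro a ha
      rw [FreeMonoid.toList_mul] at ha
      rcases List.mem_append.mp ha with h | h
      exacts [hu.2 a h, hv.2 a h]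

/-- The syntactic congruence of `L ⊆ A⁺` on `A⁺` (contexts range over `A*`). -/
def synConS (A : Finset ℕ) (L : Set (FreeMonoid ℕ)) : Con ↥(plusWordsOver A) where
  r u v := ∀ x y : FreeMonoid ℕ, InAlph A x → InAlph A y →
    ((x * ↑u * y ∈ L) ↔ (x * ↑v * y ∈ L))
  iseqv := ⟨fun _ _ _ _ _ => Iff.rfl,
    fun h x y hx hy => (h x y hx hy).symm,
    fun h1 h2 x y hx hy => (h1 x y hx hy).trans (h2 x y hx hy)⟩
  mul' := by
    intro w x y z h1 h2 a b ha hb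
    have hyb : InAlph A ((y : FreeMonoid ℕ) * b) := by
      intro c hc
      rw [FreeMonoid.toList_mul] at hc
      rcases List.mem_append.mp hc with h | h
      exacts [y.2.2 c h, hb c h]
    have hax : InAlph A (a * (x : FreeMonoid ℕ)) := by
      intro c hc
      rw [FreeMonoid.toList_mul] at hc
      rcases List.mem_append.mp hc with h | h
      exacts [ha c h, x.2.2 c h]
    have e1 : a * ↑(w * y) * b = a * (w : FreeMonoid ℕ) * (↑y * b) := by
      push_cast; simp [mul_assoc]
    have e2 : a * (x : FreeMonoid ℕ) * (↑y * b) = (a * ↑x) * ↑y * b := by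
      simp [mul_assoc]
    have e3 : (a * (x : FreeMonoid ℕ)) * ↑z * b = a * ↑(x * z) * b := by
      push_cast; simp [mul_assoc]
    rw [e1, h1 a (↑y * b) ha hyb, e2, h2 (a * ↑x) b hax hb, e3]

/-- The syntactic semigroup of `L ⊆ A⁺`. -/
def SynSemigroup (A : Finset ℕ) (L : Set (FreeMonoid ℕ)) : Type := (synConS A L).Quotient

instance (A : Finset ℕ) (L : Set (FreeMonoid ℕ)) : Semigroup (SynSemigroup A L) :=
  inferInstanceAs (Semigroup (synConS A L).Quotient)

/-- The language of nonempty words over `A` defined by the sentence `φ`. -/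
def LangOfPlus (A : Finset ℕ) (φ : FOForm) : Set (FreeMonoid ℕ) :=
  {w | w ≠ 1 ∧ InAlph A w ∧ SatS (wordToGWord w) φ}

/-- `L ⊆ A⁺` is definable in `F` over the alphabet `A`, over nonempty words. -/
def DefinablePlusIn (F : Set FOForm) (A : Finset ℕ) (L : Set (FreeMonoid ℕ)) : Prop :=
  ∃ φ ∈ F, φ.IsSentence ∧ L = LangOfPlus A φ

/-! ### Concatenation of finite families and unions of valuations -/

/-- Concatenation of a finite family of words `u 0, u 1, …, u (k-1)` (in this order). -/
def GWord.concatFam {k : ℕ} (u : Fin k → GWord) : GWord :=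
  ⟨Σₗ i : Fin k, (u i).carrier, inferInstance,
    inferInstanceAs (Countable (Lex (Σ i : Fin k, (u i).carrier))),
    fun p => (u (ofLex p).1).label (ofLex p).2⟩

/-- The union of a family of valuations with (mutually disjoint) domains, as a valuation
on the concatenation. -/
def combineVal {k : ℕ} (u : Fin k → GWord) (α : ∀ i : Fin k, ℕ → Option (u i).carrier)
    (x : ℕ) : Option (GWord.concatFam u).carrier :=
  (List.finRange k).findSome? fun i => ((α i x).map fun p => toLex ⟨i, p⟩)

/-! ### Auxiliary machinery for the proof of Statement 3 -/

/-- Composition of contexts: plugging one context into the hole of another. -/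
def FOCtx.comp : FOCtx → FOCtx → FOCtx
  | .hole, ν => ν
  | .notC μ, ν => .notC (μ.comp ν)
  | .orL μ ψ, ν => .orL (μ.comp ν) ψ
  | .orR φ μ, ν => .orR φ (μ.comp ν)
  | .andL μ ψ, ν => .andL (μ.comp ν) ψ
  | .andR φ μ, ν => .andR φ (μ.comp ν)
  | .exC x μ, ν => .exC x (μ.comp ν)
  | .allC x μ, ν => .allC x (μ.comp ν)

lemma FOCtx.comp_subst (μ ν : FOCtx) (φ : FOForm) :
    (μ.comp ν).subst φ = μ.subst (ν.subst φ) := by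
  induction μ <;> simp [FOCtx.comp, FOCtx.subst, *]

/-- The context corresponding to prefixing a (possibly negated) quantifier. -/
def Quant.ctx : Quant → ℕ → FOCtx
  | .qex, x => .exC x .hole
  | .qall, x => .allC x .hole
  | .qnex, x => .notC (.exC x .hole)
  | .qnall, x => .notC (.allC x .hole)

lemma Quant.ctx_subst (Q : Quant) (x : ℕ) (φ : FOForm) :
    (Q.ctx x).subst φ = Q.apply x φ := by
  cases Q <;> rfl

lemma mem_reduct {Q : Quant} {x : ℕ} {F : Set FOForm} {φ : FOForm} :
    φ ∈ reduct Q x F ↔ Q.apply x φ ∈ F := Iff.rfl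

lemma subst_mem_reduct {Q : Quant} {x : ℕ} {F : Set FOForm} {μ : FOCtx} {ψ : FOForm} :
    μ.subst ψ ∈ reduct Q x F ↔ ((Q.ctx x).comp μ).subst ψ ∈ F := by
  rw [mem_reduct, FOCtx.comp_subst, Quant.ctx_subst]

lemma qd_apply (Q : Quant) (x : ℕ) (φ : FOForm) : (Q.apply x φ).qd = φ.qd + 1 := by
  cases Q <;> simp [Quant.apply, FOForm.qd]

lemma SucStable.reduct {F : Set FOForm} (h : SucStable F) (Q : Quant) (x : ℕ) :
    SucStable (reduct Q x F) := by
  constructor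
  · intro μ a b hm
    rw [subst_mem_reduct] at hm
    have h1 := h.1 ((Q.ctx x).comp μ) a b hm
    exact ⟨subst_mem_reduct.2 h1.1, subst_mem_reduct.2 h1.2.1, subst_mem_reduct.2 h1.2.2⟩
  · intro μ a hm
    refine subst_mem_reduct.2 (h.2 ((Q.ctx x).comp μ) a ?_)
    rcases hm with hm | hm
    · exact Or.inl (subst_mem_reduct.1 hm)
    · exact Or.inr (subst_mem_reduct.1 hm)

/-! ### Distances with infinity -/

/-- Distances: natural numbers extended with `∞`. -/
abbrev Dist := WithTop ℕ

lemma dist_cases (d : Dist) : d = ⊤ ∨ ∃ k : ℕ, d = (k : Dist) := by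
  cases d using WithTop.recTopCoe with
  | top => exact Or.inl rfl
  | coe k => exact Or.inr ⟨k, rfl⟩

/-- The gap condition of the Ehrenfeucht–Fraïssé style matching invariant. -/
def gapCond (r : ℕ) (d d' : Dist) : Prop :=
  d = d' ∨ (((2 ^ (r + 1) : ℕ) : Dist) ≤ d ∧ ((2 ^ (r + 1) : ℕ) : Dist) ≤ d')

lemma gapCond.symm {r : ℕ} {d d' : Dist} (h : gapCond r d d') : gapCond r d' d := by
  rcases h with h | h
  exacts [Or.inl h.symm, Or.inr ⟨h.2, h.1⟩]

lemma gapCond.mono {r r' : ℕ} {d d' : Dist} (hr : r' ≤ r) (h : gapCond r d d') :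
    gapCond r' d d' := by
  rcases h with h | h
  · exact Or.inl h
  · refine Or.inr ⟨le_trans ?_ h.1, le_trans ?_ h.2⟩ <;>
      exact_mod_cast WithTop.coe_le_coe.2 (Nat.pow_le_pow_right (by norm_num) (by omega))

lemma gapCond.add {r : ℕ} {d1 d1' d2 d2' : Dist} (h1 : gapCond r d1 d1')
    (h2 : gapCond r d2 d2') : gapCond r (d1 + d2) (d1' + d2') := by
  rcases h1 with h1 | h1
  · rcases h2 with h2 | h2
    · exact Or.inl (by rw [h1, h2])
    · exact Or.inr ⟨le_trans h2.1 (le_add_self), le_trans h2.2 (le_add_self)⟩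
  · exact Or.inr ⟨le_trans h1.1 (le_self_add), le_trans h1.2 (le_self_add)⟩

lemma gapCond.eq_one {r : ℕ} {d d' : Dist} (h : gapCond r d d') : d = 1 ↔ d' = 1 := by
  have h2 : ¬ (((2 ^ (r + 1) : ℕ) : Dist) ≤ 1) := by
    exact_mod_cast not_le.2 (show (1:ℕ) < 2 ^ (r+1) from Nat.one_lt_two_pow (by omega))
  rcases h with h | h
  · rw [h]
  · constructor <;> intro h1 <;> [exact absurd (h1 ▸ h.1) h2; exact absurd (h1 ▸ h.2) h2]

/-! ### Index orders with sentinels and a distance function -/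

/-- A linear order extended with bottom and top sentinels. -/
abbrev EInd (I : Type) := WithBot (WithTop I)

/-- The embedding of `I` into `EInd I`. -/
def eCoe {I : Type} (i : I) : EInd I := ((i : WithTop I) : EInd I)

section EIndLemmas

variable {I : Type} [LinearOrder I]

lemma bot_lt_eCoe (i : I) : (⊥ : EInd I) < eCoe i := WithBot.bot_lt_coe _

lemma eCoe_lt_top (i : I) : eCoe i < (⊤ : EInd I) := by
  show ((i : WithTop I) : EInd I) < ((⊤ : WithTop I) : EInd I)
  exact WithBot.coe_lt_coe.2 (WithTop.coe_lt_top i)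

lemma ebot_lt_etop : (⊥ : EInd I) < (⊤ : EInd I) := by
  show (⊥ : EInd I) < ((⊤ : WithTop I) : EInd I)
  exact WithBot.bot_lt_coe _

lemma eCoe_lt_eCoe {i j : I} : eCoe i < eCoe j ↔ i < j := by
  unfold eCoe
  rw [WithBot.coe_lt_coe, WithTop.coe_lt_coe]

lemma eCoe_inj {i j : I} (h : eCoe i = eCoe j) : i = j := by
  unfold eCoe at h
  exact_mod_cast h

lemma eCoe_ne_bot (i : I) : eCoe i ≠ (⊥ : EInd I) := WithBot.coe_ne_bot

lemma eCoe_ne_top (i : I) : eCoe i ≠ (⊤ : EInd I) := (eCoe_lt_top i).ne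

end EIndLemmas

/-- A distance structure on a linear order with sentinels, supporting the EF-game
argument on the index orders. -/
structure GapStruct (I : Type) [LinearOrder I] where
  D : EInd I → EInd I → Dist
  d_zero : ∀ {e e' : EInd I}, e ≤ e' → (D e e' = 0 ↔ e = e')
  d_add : ∀ {e e' e'' : EInd I}, e ≤ e' → e' ≤ e'' → D e e'' = D e e' + D e' e''
  d_one : ∀ {e e' : EInd I}, e < e' →
    (D e e' = 1 ↔ ∀ c : I, ¬(e < eCoe c ∧ eCoe c < e'))
  ex_bot : ∀ {e e' : EInd I} (g : ℕ), e < e' → 0 < g → ((g : ℕ) : Dist) < D e e' →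
    ∃ c : I, e < eCoe c ∧ eCoe c < e' ∧ D e (eCoe c) = ((g : ℕ) : Dist)
  ex_top : ∀ {e e' : EInd I} (g : ℕ), e < e' → 0 < g → ((g : ℕ) : Dist) < D e e' →
    ∃ c : I, e < eCoe c ∧ eCoe c < e' ∧ D (eCoe c) e' = ((g : ℕ) : Dist)

lemma GapStruct.d_pos {I : Type} [LinearOrder I] (G : GapStruct I) {e e' : EInd I}
    (h : e < e') : G.D e e' ≠ 0 := by
  intro h0
  exact h.ne ((G.d_zero h.le).1 h0)
/-! ### Building a `GapStruct` from fiber/offset coordinates -/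

section MkGap

variable {I Φ : Type} [LinearOrder I] [LinearOrder Φ]
variable (fib : EInd I → Φ) (off : EInd I → ℤ)

open Classical in
/-- The distance determined by fiber/offset coordinates. -/
noncomputable def fibDist (e e' : EInd I) : Dist :=
  if fib e = fib e' then (((off e' - off e).toNat : ℕ) : Dist) else ⊤

lemma char_eq
    (char : ∀ e e' : EInd I, e < e' ↔ (fib e < fib e' ∨ (fib e = fib e' ∧ off e < off e')))
    {e e' : EInd I} (hf : fib e = fib e')
    (ho : off e = off e') : e = e' := by
  rcases lt_trichotomy e e' with h | h | h
  · rcases (char e e').1 h with h1 | h1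
    · exact absurd hf h1.ne
    · omega
  · exact h
  · rcases (char e' e).1 h with h1 | h1
    · exact absurd hf.symm h1.ne
    · omega

lemma char_le
    (char : ∀ e e' : EInd I, e < e' ↔ (fib e < fib e' ∨ (fib e = fib e' ∧ off e < off e')))
    {e e' : EInd I} (h : e ≤ e') :
    fib e < fib e' ∨ (fib e = fib e' ∧ off e ≤ off e') := by
  rcases eq_or_lt_of_le h with rfl | h
  · exact Or.inr ⟨rfl, le_refl _⟩
  · rcases (char e e').1 h with h1 | h1
    · exact Or.inl h1
    · exact Or.inr ⟨h1.1, h1.2.le⟩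

variable
    (char : ∀ e e' : EInd I, e < e' ↔ (fib e < fib e' ∨ (fib e = fib e' ∧ off e < off e')))
    (realU : ∀ e e' : EInd I, e < e' → ∀ o : ℤ, off e < o → (fib e = fib e' → o < off e') →
      ∃ c : I, fib (eCoe c) = fib e ∧ off (eCoe c) = o)
    (realD : ∀ e e' : EInd I, e < e' → ∀ o : ℤ, o < off e' → (fib e = fib e' → off e < o) →
      ∃ c : I, fib (eCoe c) = fib e' ∧ off (eCoe c) = o)

/-- Build a `GapStruct` from fiber/offset coordinates. -/
noncomputable def mkGap : GapStruct I where
  D := fibDist fib off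
  d_zero := by
    intro e e' h
    unfold fibDist
    split
    · rename_i hf
      rcases char_le fib off char h with h1 | h1
      · exact absurd hf h1.ne
      constructor
      · intro h0
        have : (off e' - off e).toNat = 0 := by exact_mod_cast h0
        exact char_eq fib off char hf (by omega)
      · rintro rfl
        simp
    · rename_i hf
      constructor
      · intro h0
        simp at h0
      · rintro rfl
        exact absurd rfl hf
  d_add := by
    intro e e' e'' h1 h2
    unfold fibDist
    have hf1 := char_le fib off char h1
    have hf2 := char_le fib off char h2
    split
    · rename_i hf
      -- fib e = fib e''; hence all three fibers are equal
      have hfe : fib e = fib e' := by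
        rcases hf1 with h | h
        · rcases hf2 with h' | h'
          · exact absurd hf (ne_of_lt (lt_trans h h'))
          · exact absurd hf (h'.1 ▸ h).ne
        · exact h.1
      have hfe' : fib e' = fib e'' := hfe ▸ hf
      rw [if_pos hfe, if_pos hfe']
      have ho1 : off e ≤ off e' := by
        rcases hf1 with h | h
        · exact absurd hfe h.ne
        · exact h.2
      have ho2 : off e' ≤ off e'' := by
        rcases hf2 with h | h
        · exact absurd hfe' h.ne
        · exact h.2
      have : (off e'' - off e).toNat = (off e' - off e).toNat + (off e'' - off e').toNat := by
        omega
      rw [this]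
      push_cast
      ring
    · rename_i hf
      have : fib e ≠ fib e' ∨ fib e' ≠ fib e'' := by
        by_contra hc
        push_neg at hc
        exact hf (hc.1.trans hc.2)
      rcases this with h | h
      · rw [if_neg h, top_add]
      · rw [if_neg h, add_top]
  d_one := by
    intro e e' hlt
    constructor
    · intro hD c hc
      unfold fibDist at hD
      rcases hc with ⟨hc1, hc2⟩
      split at hD
      · rename_i hf
        have h1 : (off e' - off e).toNat = 1 := by exact_mod_cast hD
        have hfc : fib e = fib (eCoe c) := by
          have ha := char_le fib off char hc1.le
          have hb := char_le fib off char hc2.le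
          rcases ha with ha | ha
          · rcases hb with hb | hb
            · exact absurd hf (ne_of_lt (lt_trans ha hb))
            · exact absurd hf (hb.1 ▸ ha).ne
          · exact ha.1
        have hoc1 : off e < off (eCoe c) := by
          rcases (char _ _).1 hc1 with h | h
          · exact absurd hfc h.ne
          · exact h.2
        have hoc2 : off (eCoe c) < off e' := by
          rcases (char _ _).1 hc2 with h | h
          · exact absurd (hfc ▸ hf) h.ne
          · exact h.2
        omega
      · simp at hD
    · intro hnc
      unfold fibDist
      by_cases hf : fib e = fib e'
      · rw [if_pos hf]
        have ho : off e < off e' := by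
          rcases (char _ _).1 hlt with h | h
          · exact absurd hf h.ne
          · exact h.2
        by_contra hne
        have h2 : 2 ≤ off e' - off e := by
          have h1 : (off e' - off e).toNat ≠ 1 := fun h => hne (by exact_mod_cast h)
          omega
        obtain ⟨c, hc1, hc2⟩ := realU e e' hlt (off e + 1) (by omega) (fun _ => by omega)
        refine hnc c ⟨?_, ?_⟩
        · exact (char _ _).2 (Or.inr ⟨hc1.symm, by omega⟩)
        · exact (char _ _).2 (Or.inr ⟨by rw [hc1, hf], by omega⟩)
      · rw [if_neg hf]
        have hflt : fib e < fib e' := by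
          rcases (char _ _).1 hlt with h | h
          · exact h
          · exact absurd h.1 hf
        by_contra hne
        obtain ⟨c, hc1, hc2⟩ := realU e e' hlt (off e + 1) (by omega) (fun h => absurd h hf)
        refine hnc c ⟨?_, ?_⟩
        · exact (char _ _).2 (Or.inr ⟨hc1.symm, by omega⟩)
        · exact (char _ _).2 (Or.inl (hc1 ▸ hflt))
  ex_bot := by
    intro e e' g hlt hg hgD
    unfold fibDist at hgD ⊢
    by_cases hf : fib e = fib e'
    · rw [if_pos hf] at hgD
      have hglt : (g : ℕ) < (off e' - off e).toNat := by exact_mod_cast hgD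
      obtain ⟨c, hc1, hc2⟩ := realU e e' hlt (off e + g) (by omega) (fun _ => by omega)
      refine ⟨c, ?_, ?_, ?_⟩
      · exact (char _ _).2 (Or.inr ⟨hc1.symm, by omega⟩)
      · exact (char _ _).2 (Or.inr ⟨by rw [hc1, hf], by omega⟩)
      · rw [if_pos hc1.symm]
        congr 1
        omega
    · have hflt : fib e < fib e' := by
        rcases (char _ _).1 hlt with h | h
        · exact h
        · exact absurd h.1 hf
      obtain ⟨c, hc1, hc2⟩ := realU e e' hlt (off e + g) (by omega) (fun h => absurd h hf)
      refine ⟨c, ?_, ?_, ?_⟩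
      · exact (char _ _).2 (Or.inr ⟨hc1.symm, by omega⟩)
      · exact (char _ _).2 (Or.inl (hc1 ▸ hflt))
      · rw [if_pos hc1.symm]
        congr 1
        omega
  ex_top := by
    intro e e' g hlt hg hgD
    unfold fibDist at hgD ⊢
    by_cases hf : fib e = fib e'
    · rw [if_pos hf] at hgD
      have hglt : (g : ℕ) < (off e' - off e).toNat := by exact_mod_cast hgD
      obtain ⟨c, hc1, hc2⟩ := realD e e' hlt (off e' - g) (by omega) (fun _ => by omega)
      refine ⟨c, ?_, ?_, ?_⟩
      · exact (char _ _).2 (Or.inr ⟨hf.trans hc1.symm, by omega⟩)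
      · exact (char _ _).2 (Or.inr ⟨hc1, by omega⟩)
      · rw [if_pos hc1]
        congr 1
        omega
    · have hflt : fib e < fib e' := by
        rcases (char _ _).1 hlt with h | h
        · exact h
        · exact absurd h.1 hf
      obtain ⟨c, hc1, hc2⟩ := realD e e' hlt (off e' - g) (by omega) (fun h => absurd h hf)
      refine ⟨c, ?_, ?_, ?_⟩
      · exact (char _ _).2 (Or.inl (hc1.symm ▸ hflt))
      · exact (char _ _).2 (Or.inr ⟨hc1, by omega⟩)
      · rw [if_pos hc1]
        congr 1
        omega

end MkGap
/-! ### The matching invariant between the two index orders -/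

section MatchInvSec

variable {I J : Type} [LinearOrder I] [LinearOrder J]

/-- Update of a partial map. -/
def updO {γ : Type} (f : ℕ → Option γ) (x : ℕ) (v : γ) : ℕ → Option γ :=
  fun y => if y = x then some v else f y

/-- Erasure of a partial map at a point. -/
def eraseO {γ : Type} (f : ℕ → Option γ) (x : ℕ) : ℕ → Option γ :=
  fun y => if y = x then none else f y

lemma eraseO_eq_self {γ : Type} {f : ℕ → Option γ} {x : ℕ} (h : f x = none) :
    eraseO f x = f := by
  funext y
  unfold eraseO
  split
  · rename_i hy; rw [hy, h]
  · rfl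

/-- The matched pairs (including the sentinel pairs) determined by two partial maps. -/
def mpairs (f : ℕ → Option I) (g : ℕ → Option J) : Set (EInd I × EInd J) :=
  {z | z = (⊥, ⊥) ∨ z = (⊤, ⊤) ∨
    ∃ x i j, f x = some i ∧ g x = some j ∧ z = (eCoe i, eCoe j)}

lemma bot_mem_mpairs (f : ℕ → Option I) (g : ℕ → Option J) :
    ((⊥, ⊥) : EInd I × EInd J) ∈ mpairs f g := Or.inl rfl

lemma top_mem_mpairs (f : ℕ → Option I) (g : ℕ → Option J) :
    ((⊤, ⊤) : EInd I × EInd J) ∈ mpairs f g := Or.inr (Or.inl rfl)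

lemma pair_mem_mpairs {f : ℕ → Option I} {g : ℕ → Option J} {x : ℕ} {i : I} {j : J}
    (hf : f x = some i) (hg : g x = some j) : (eCoe i, eCoe j) ∈ mpairs f g :=
  Or.inr (Or.inr ⟨x, i, j, hf, hg, rfl⟩)

lemma mem_mpairs_swap {f : ℕ → Option I} {g : ℕ → Option J} {z : EInd J × EInd I} :
    z ∈ mpairs g f ↔ (z.2, z.1) ∈ mpairs f g := by
  unfold mpairs
  simp only [Set.mem_setOf_eq, Prod.ext_iff]
  constructor
  · rintro (⟨h1, h2⟩ | ⟨h1, h2⟩ | ⟨x, j, i, h1, h2, h3, h4⟩)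
    · exact Or.inl ⟨h2, h1⟩
    · exact Or.inr (Or.inl ⟨h2, h1⟩)
    · exact Or.inr (Or.inr ⟨x, i, j, h2, h1, h4, h3⟩)
  · rintro (⟨h1, h2⟩ | ⟨h1, h2⟩ | ⟨x, i, j, h1, h2, h3, h4⟩)
    · exact Or.inl ⟨h2, h1⟩
    · exact Or.inr (Or.inl ⟨h2, h1⟩)
    · exact Or.inr (Or.inr ⟨x, j, i, h2, h1, h4, h3⟩)

lemma mpairs_erase_subset {f : ℕ → Option I} {g : ℕ → Option J} {x : ℕ} :
    mpairs (eraseO f x) (eraseO g x) ⊆ mpairs f g := by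
  rintro z (h | h | ⟨y, i, j, h1, h2, h3⟩)
  · exact Or.inl h
  · exact Or.inr (Or.inl h)
  · unfold eraseO at h1 h2
    by_cases hy : y = x
    · rw [if_pos hy] at h1; exact absurd h1 (by simp)
    · rw [if_neg hy] at h1 h2
      exact Or.inr (Or.inr ⟨y, i, j, h1, h2, h3⟩)

lemma mpairs_dead {f : ℕ → Option I} {g : ℕ → Option J} {x : ℕ}
    {z : EInd I × EInd J} (hz : z ∈ mpairs f g)
    (hz' : z ∉ mpairs (eraseO f x) (eraseO g x)) :
    ∃ i j, f x = some i ∧ g x = some j ∧ z = (eCoe i, eCoe j) := by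
  rcases hz with h | h | ⟨y, i, j, h1, h2, h3⟩
  · exact absurd (Or.inl h) hz'
  · exact absurd (Or.inr (Or.inl h)) hz'
  · by_cases hy : y = x
    · exact ⟨i, j, hy ▸ h1, hy ▸ h2, h3⟩
    · refine absurd (Or.inr (Or.inr ⟨y, i, j, ?_, ?_, h3⟩)) hz' <;>
        · unfold eraseO; rw [if_neg hy]; assumption
  
lemma mpairs_upd {f : ℕ → Option I} {g : ℕ → Option J} {x : ℕ} {i : I} {j : J} :
    mpairs (updO f x i) (updO g x j) =
      insert (eCoe i, eCoe j) (mpairs (eraseO f x) (eraseO g x)) := by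
  ext z
  constructor
  · rintro (h | h | ⟨y, i', j', h1, h2, h3⟩)
    · exact Or.inr (Or.inl h)
    · exact Or.inr (Or.inr (Or.inl h))
    · unfold updO at h1 h2
      by_cases hy : y = x
      · rw [if_pos hy] at h1 h2
        obtain rfl : i' = i := by injection h1.symm
        obtain rfl : j' = j := by injection h2.symm
        exact Or.inl h3
      · rw [if_neg hy] at h1 h2
        refine Or.inr (Or.inr (Or.inr ⟨y, i', j', ?_, ?_, h3⟩)) <;>
          · unfold eraseO; rw [if_neg hy]; assumption
  · rintro (h | h | h | ⟨y, i', j', h1, h2, h3⟩)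
    · exact Or.inr (Or.inr ⟨x, i, j, by unfold updO; simp, by unfold updO; simp, h⟩)
    · exact Or.inl h
    · exact Or.inr (Or.inl h)
    · unfold eraseO at h1 h2
      by_cases hy : y = x
      · rw [if_pos hy] at h1; exact absurd h1 (by simp)
      · rw [if_neg hy] at h1 h2
        exact Or.inr (Or.inr ⟨y, i', j', by unfold updO; rw [if_neg hy]; exact h1,
          by unfold updO; rw [if_neg hy]; exact h2, h3⟩)

lemma mpairs_finite {f : ℕ → Option I} {g : ℕ → Option J}
    (h : ∃ V : Finset ℕ, ∀ y, (f y).isSome ↔ y ∈ V) : (mpairs f g).Finite := by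
  obtain ⟨V, hV⟩ := h
  have hsub : mpairs f g ⊆ insert ((⊥, ⊥) : EInd I × EInd J) (insert ((⊤, ⊤) : EInd I × EInd J)
      ((fun y => (((f y).elim ⊥ eCoe : EInd I), ((g y).elim ⊥ eCoe : EInd J))) '' ↑V)) := by
    rintro z (h | h | ⟨y, i, j, h1, h2, h3⟩)
    · exact Or.inl h
    · exact Or.inr (Or.inl h)
    · refine Or.inr (Or.inr ⟨y, ?_, ?_⟩)
      · exact (hV y).1 (by rw [h1]; rfl)
      · show ((f y).elim ⊥ eCoe, (g y).elim ⊥ eCoe) = z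
        rw [h1, h2, h3]
        rfl
  exact Set.Finite.subset (Set.Finite.insert _ (Set.Finite.insert _
    (Set.Finite.image _ (Finset.finite_toSet V)))) hsub

/-- The matching invariant: the matched pairs are aligned in order, and consecutive
matched pairs satisfy the gap condition with parameter `r`. -/
def MatchInv (GI : GapStruct I) (GJ : GapStruct J) (r : ℕ)
    (f : ℕ → Option I) (g : ℕ → Option J) : Prop :=
  (∀ z ∈ mpairs f g, ∀ z' ∈ mpairs f g, z.1 < z'.1 ↔ z.2 < z'.2) ∧
  (∀ z ∈ mpairs f g, ∀ z' ∈ mpairs f g, z.1 < z'.1 →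
    (∀ w ∈ mpairs f g, ¬(z.1 < w.1 ∧ w.1 < z'.1)) →
    gapCond r (GI.D z.1 z'.1) (GJ.D z.2 z'.2))

variable {GI : GapStruct I} {GJ : GapStruct J}

lemma MatchInv.le_iff {r f g} (M : MatchInv GI GJ r f g)
    {z z' : EInd I × EInd J} (hz : z ∈ mpairs f g) (hz' : z' ∈ mpairs f g) :
    z.1 ≤ z'.1 ↔ z.2 ≤ z'.2 := by
  rw [← not_lt, ← not_lt, M.1 z' hz' z hz]

lemma MatchInv.eq_iff {r f g} (M : MatchInv GI GJ r f g)
    {z z' : EInd I × EInd J} (hz : z ∈ mpairs f g) (hz' : z' ∈ mpairs f g) :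
    z.1 = z'.1 ↔ z.2 = z'.2 := by
  constructor <;> intro h
  · exact le_antisymm ((M.le_iff hz hz').1 h.le) ((M.le_iff hz' hz).1 h.ge)
  · exact le_antisymm ((M.le_iff hz hz').2 h.le) ((M.le_iff hz' hz).2 h.ge)

lemma MatchInv.symm {r f g} (M : MatchInv GI GJ r f g) : MatchInv GJ GI r g f := by
  obtain ⟨M1, M2⟩ := M
  constructor
  · intro z hz z' hz'
    exact (M1 (z.2, z.1) (mem_mpairs_swap.1 hz) (z'.2, z'.1) (mem_mpairs_swap.1 hz')).symm
  · intro z hz z' hz' hlt hcons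
    have hltI : z.2 < z'.2 :=
      (M1 (z.2, z.1) (mem_mpairs_swap.1 hz) (z'.2, z'.1) (mem_mpairs_swap.1 hz')).2 hlt
    have hconsI : ∀ w ∈ mpairs f g, ¬(z.2 < w.1 ∧ w.1 < z'.2) := by
      rintro w hw ⟨h1, h2⟩
      refine hcons (w.2, w.1) (mem_mpairs_swap.2 (by simpa using hw)) ⟨?_, ?_⟩
      · exact (M1 (z.2, z.1) (mem_mpairs_swap.1 hz) w hw).1 h1
      · exact (M1 w hw (z'.2, z'.1) (mem_mpairs_swap.1 hz')).1 h2
    exact (M2 (z.2, z.1) (mem_mpairs_swap.1 hz) (z'.2, z'.1) (mem_mpairs_swap.1 hz')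
      hltI hconsI).symm

lemma MatchInv.mono {r r' f g} (hr : r' ≤ r) (M : MatchInv GI GJ r f g) :
    MatchInv GI GJ r' f g :=
  ⟨M.1, fun z hz z' hz' hlt hcons => (M.2 z hz z' hz' hlt hcons).mono hr⟩

lemma MatchInv.erase {r f g} (M : MatchInv GI GJ r f g) (x : ℕ) :
    MatchInv GI GJ r (eraseO f x) (eraseO g x) := by
  obtain ⟨M1, M2⟩ := M
  have hsub : mpairs (eraseO f x) (eraseO g x) ⊆ mpairs f g := mpairs_erase_subset
  constructor
  · intro z hz z' hz'
    exact M1 z (hsub hz) z' (hsub hz')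
  · intro z hz z' hz' hlt hcons
    by_cases hdead : ∃ w ∈ mpairs f g, (z.1 < w.1 ∧ w.1 < z'.1) ∧
        w ∉ mpairs (eraseO f x) (eraseO g x)
    · obtain ⟨w, hw, ⟨hw1, hw2⟩, hw3⟩ := hdead
      obtain ⟨i0, j0, hfx, hgx, hwv⟩ := mpairs_dead hw hw3
      have hc1 : ∀ v ∈ mpairs f g, ¬(z.1 < v.1 ∧ v.1 < w.1) := by
        rintro v hv ⟨a, b⟩
        by_cases hv2 : v ∈ mpairs (eraseO f x) (eraseO g x)
        · exact hcons v hv2 ⟨a, b.trans hw2⟩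
        · obtain ⟨i1, j1, hfx1, hgx1, hvv⟩ := mpairs_dead hv hv2
          rw [hvv, hwv] at b
          rw [hfx1] at hfx
          injection hfx with hfx
          exact absurd rfl (by rw [hfx] at b; exact b.ne)
      have hc2 : ∀ v ∈ mpairs f g, ¬(w.1 < v.1 ∧ v.1 < z'.1) := by
        rintro v hv ⟨a, b⟩
        by_cases hv2 : v ∈ mpairs (eraseO f x) (eraseO g x)
        · exact hcons v hv2 ⟨hw1.trans a, b⟩
        · obtain ⟨i1, j1, hfx1, hgx1, hvv⟩ := mpairs_dead hv hv2
          rw [hvv, hwv] at a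
          rw [hfx1] at hfx
          injection hfx with hfx
          exact absurd rfl (by rw [hfx] at a; exact a.ne)
      have g1 := M2 z (hsub hz) w hw hw1 hc1
      have g2 := M2 w hw z' (hsub hz') hw2 hc2
      have hJ1 : z.2 < w.2 := (M1 z (hsub hz) w hw).1 hw1
      have hJ2 : w.2 < z'.2 := (M1 w hw z' (hsub hz')).1 hw2
      rw [GI.d_add hw1.le hw2.le, GJ.d_add hJ1.le hJ2.le]
      exact g1.add g2
    · push_neg at hdead
      refine M2 z (hsub hz) z' (hsub hz') hlt ?_
      rintro w hw ⟨h1, h2⟩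
      by_cases hw2 : w ∈ mpairs (eraseO f x) (eraseO g x)
      · exact hcons w hw2 ⟨h1, h2⟩
      · exact hw2 (hdead w hw ⟨h1, h2⟩)

end MatchInvSec
section InsertSec

variable {I J : Type} [LinearOrder I] [LinearOrder J]
variable {GI : GapStruct I} {GJ : GapStruct J}

lemma dist_arith {m n : ℕ} {a b : Dist} (h : ((m + n : ℕ) : Dist) ≤ a + b)
    (hb : b ≤ ((n : ℕ) : Dist)) : ((m : ℕ) : Dist) ≤ a := by
  rcases dist_cases a with rfl | ⟨ka, rfl⟩
  · exact le_top
  rcases dist_cases b with rfl | ⟨kb, rfl⟩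
  · exact absurd hb (by simp)
  have h' : m + n ≤ ka + kb := by exact_mod_cast h
  have hb' : kb ≤ n := by exact_mod_cast hb
  exact_mod_cast (show m ≤ ka by omega)

lemma dist_lt_add_right {k : ℕ} {d : Dist} (hd : d ≠ 0) :
    ((k : ℕ) : Dist) < ((k : ℕ) : Dist) + d := by
  rcases dist_cases d with rfl | ⟨kd, rfl⟩
  · rw [add_top]
    exact (WithTop.lt_iff_exists_coe).2 ⟨k, by exact_mod_cast rfl, WithTop.coe_lt_top k⟩
  · have hkd : kd ≠ 0 := by exact_mod_cast hd
    exact_mod_cast (show k < k + kd by omega)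

lemma dist_lt_add_left {k : ℕ} {d : Dist} (hd : d ≠ 0) :
    ((k : ℕ) : Dist) < d + ((k : ℕ) : Dist) := by
  rw [add_comm]
  exact dist_lt_add_right hd

lemma dist_add_big {B : ℕ} {a b : Dist} (ha : ((B : ℕ) : Dist) < a)
    (hb : ((B : ℕ) : Dist) < b) : ((B + B : ℕ) : Dist) ≤ a + b := by
  rcases dist_cases a with rfl | ⟨ka, rfl⟩
  · rw [top_add]; exact le_top
  rcases dist_cases b with rfl | ⟨kb, rfl⟩
  · rw [add_top]; exact le_top
  have ha' : B < ka := by exact_mod_cast ha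
  have hb' : B < kb := by exact_mod_cast hb
  exact_mod_cast (show B + B ≤ ka + kb by omega)

lemma dist_le_coe_cases {B : ℕ} {d : Dist} (h : d ≤ ((B : ℕ) : Dist)) :
    ∃ k : ℕ, d = ((k : ℕ) : Dist) ∧ k ≤ B := by
  rcases dist_cases d with rfl | ⟨k, rfl⟩
  · exact absurd h (by simp)
  · exact ⟨k, rfl, by exact_mod_cast h⟩

/-- Assembling the matching invariant after inserting a fresh matched pair between
its two neighbours. -/
lemma MatchInv.insert_aux {r : ℕ} {f : ℕ → Option I} {g : ℕ → Option J}
    (M : MatchInv GI GJ r f g)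
    (x : ℕ) (hfx : f x = none) (hgx : g x = none) (i : I) (j : J)
    (hni : ∀ z ∈ mpairs f g, z.1 ≠ eCoe i)
    (L U : EInd I × EInd J) (hLS : L ∈ mpairs f g) (hUS : U ∈ mpairs f g)
    (hLi : L.1 < eCoe i) (hiU : eCoe i < U.1)
    (hLmax : ∀ z ∈ mpairs f g, z.1 < eCoe i → z.1 ≤ L.1)
    (hUmin : ∀ z ∈ mpairs f g, eCoe i < z.1 → U.1 ≤ z.1)
    (hj1 : L.2 < eCoe j) (hj2 : eCoe j < U.2)
    (gc1 : gapCond (r-1) (GI.D L.1 (eCoe i)) (GJ.D L.2 (eCoe j)))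
    (gc2 : gapCond (r-1) (GI.D (eCoe i) U.1) (GJ.D (eCoe j) U.2)) :
    MatchInv GI GJ (r-1) (updO f x i) (updO g x j) := by
  have hset : mpairs (updO f x i) (updO g x j) =
      insert (eCoe i, eCoe j) (mpairs f g) := by
    rw [mpairs_upd, eraseO_eq_self hfx, eraseO_eq_self hgx]
  -- order alignment of old pairs with the new pair
  have hord : ∀ z ∈ mpairs f g, (z.1 < eCoe i ↔ z.2 < eCoe j) ∧
      (eCoe i < z.1 ↔ eCoe j < z.2) := by
    intro z hz
    have h1 : z.1 < eCoe i → z.2 < eCoe j := by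
      intro h
      have := (M.le_iff hz hLS).1 (hLmax z hz h)
      exact lt_of_le_of_lt this hj1
    have h2 : eCoe i < z.1 → eCoe j < z.2 := by
      intro h
      have := (M.le_iff hUS hz).1 (hUmin z hz h)
      exact lt_of_lt_of_le hj2 this
    constructor
    · constructor
      · exact h1
      · intro h
        rcases lt_trichotomy z.1 (eCoe i) with h' | h' | h'
        · exact h'
        · exact absurd h' (hni z hz)
        · exact absurd h (not_lt.2 (h2 h').le)
    · constructor
      · exact h2
      · intro h
        rcases lt_trichotomy z.1 (eCoe i) with h' | h' | h'
        · exact absurd h (not_lt.2 (h1 h').le)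
        · exact absurd h' (hni z hz)
        · exact h'
  rw [MatchInv, hset]
  constructor
  · rintro z (rfl | hz) z' (rfl | hz')
    · simp
    · exact (hord z' hz').2
    · constructor <;> intro h
      · exact ((hord z hz).1).1 h
      · exact ((hord z hz).1).2 h
    · exact M.1 z hz z' hz'
  · rintro z (rfl | hz) z' (rfl | hz') hlt hcons
    · exact absurd hlt (lt_irrefl _)
    · -- new pair below an old pair: the old pair must be `U`
      have hU1 : z'.1 = U.1 := by
        rcases lt_trichotomy z'.1 U.1 with h | h | h
        · exact absurd h (not_lt.2 (hUmin z' hz' hlt))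
        · exact h
        · exact absurd ⟨hiU, h⟩ (hcons U (Or.inr hUS))
      have hU2 : z'.2 = U.2 := (M.eq_iff hz' hUS).1 hU1
      rw [hU1, hU2]
      exact gc2
    · -- old pair below the new pair: the old pair must be `L`
      have hL1 : z.1 = L.1 := by
        rcases lt_trichotomy z.1 L.1 with h | h | h
        · exact absurd ⟨h, hLi⟩ (hcons L (Or.inr hLS))
        · exact h
        · exact absurd (hLmax z hz hlt) (not_le.2 h)
      have hL2 : z.2 = L.2 := (M.eq_iff hz hLS).1 hL1
      rw [hL1, hL2]
      exact gc1
    · refine (M.2 z hz z' hz' hlt ?_).mono (Nat.sub_le r 1)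
      rintro w hw ⟨h1, h2⟩
      exact hcons w (Or.inr hw) ⟨h1, h2⟩

/-- Duplicator's index strategy: inserting a point on the `I` side, there is a reply
on the `J` side preserving the matching invariant (with one unit of budget spent). -/
lemma MatchInv.insertI {r : ℕ} {f : ℕ → Option I} {g : ℕ → Option J}
    (hr : 1 ≤ r) (M : MatchInv GI GJ r f g) (hfin : (mpairs f g).Finite)
    (x : ℕ) (hfx : f x = none) (hgx : g x = none) (i : I) :
    ∃ j : J, MatchInv GI GJ (r - 1) (updO f x i) (updO g x j) := by
  by_cases hex : ∃ z ∈ mpairs f g, z.1 = eCoe i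
  · -- the index `i` is already matched: reply with its partner
    obtain ⟨z, hz, hz1⟩ := hex
    have hzS := hz
    rcases hz with h | h | ⟨y, i0, j0, h1, h2, h3⟩
    · exact absurd (by rw [h] at hz1; exact hz1.symm) (eCoe_ne_bot i)
    · exact absurd (by rw [h] at hz1; exact hz1.symm) (eCoe_ne_top i)
    · refine ⟨j0, ?_⟩
      have hzi : z = (eCoe i, eCoe j0) := by
        rw [h3] at hz1 ⊢
        rw [Prod.ext_iff]
        exact ⟨hz1, rfl⟩
      have hset : mpairs (updO f x i) (updO g x j0) = mpairs f g := by
        rw [mpairs_upd, eraseO_eq_self hfx, eraseO_eq_self hgx,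
          Set.insert_eq_of_mem (hzi ▸ hzS)]
      rw [MatchInv, hset]
      exact M.mono (Nat.sub_le r 1)
  · push_neg at hex
    -- the neighbours of `i` among the matched pairs
    have hTLfin : {z ∈ mpairs f g | z.1 < eCoe i}.Finite :=
      hfin.subset (fun z hz => hz.1)
    have hTLne : {z ∈ mpairs f g | z.1 < eCoe i}.Nonempty :=
      ⟨(⊥, ⊥), bot_mem_mpairs f g, bot_lt_eCoe i⟩
    obtain ⟨L, hLmem, hLmax'⟩ := Set.Finite.exists_maximalFor Prod.fst _ hTLfin hTLne
    have hTUfin : {z ∈ mpairs f g | eCoe i < z.1}.Finite :=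
      hfin.subset (fun z hz => hz.1)
    have hTUne : {z ∈ mpairs f g | eCoe i < z.1}.Nonempty :=
      ⟨(⊤, ⊤), top_mem_mpairs f g, eCoe_lt_top i⟩
    obtain ⟨U, hUmem, hUmin'⟩ := Set.Finite.exists_minimalFor Prod.fst _ hTUfin hTUne
    obtain ⟨hLS, hLi⟩ := hLmem
    obtain ⟨hUS, hiU⟩ := hUmem
    have hLmax : ∀ z ∈ mpairs f g, z.1 < eCoe i → z.1 ≤ L.1 := by
      intro z hz h
      by_contra hc
      exact hc (hLmax' ⟨hz, h⟩ (not_le.1 hc).le)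
    have hUmin : ∀ z ∈ mpairs f g, eCoe i < z.1 → U.1 ≤ z.1 := by
      intro z hz h
      by_contra hc
      exact hc (hUmin' ⟨hz, h⟩ (not_le.1 hc).le)
    have hLU : L.1 < U.1 := hLi.trans hiU
    have hJlt : L.2 < U.2 := (M.1 L hLS U hUS).1 hLU
    have hcons : ∀ w ∈ mpairs f g, ¬(L.1 < w.1 ∧ w.1 < U.1) := by
      rintro w hw ⟨h1, h2⟩
      rcases lt_trichotomy w.1 (eCoe i) with h | h | h
      · exact absurd (hLmax w hw h) (not_le.2 h1)
      · exact hex w hw h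
      · exact absurd (hUmin w hw h) (not_le.2 h2)
    have ggap := M.2 L hLS U hUS hLU hcons
    have hsplitI : GI.D L.1 U.1 = GI.D L.1 (eCoe i) + GI.D (eCoe i) U.1 :=
      GI.d_add hLi.le hiU.le
    have hd1pos := GI.d_pos hLi
    have hd2pos := GI.d_pos hiU
    have hB1 : (2:ℕ)^(r-1+1) = 2^r := by congr 1; omega
    have hBpos : 0 < 2^r := Nat.pow_pos (n := r) (by norm_num)
    have hBB : (2:ℕ)^(r+1) = 2^r + 2^r := by rw [pow_succ]; omega
    by_cases c1 : GI.D L.1 (eCoe i) ≤ ((2^r : ℕ) : Dist)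
    · -- copy the lower gap exactly
      obtain ⟨g1, hg1, hg1B⟩ := dist_le_coe_cases c1
      have hg1pos : 0 < g1 := by
        rcases Nat.eq_zero_or_pos g1 with h | h
        · rw [h] at hg1
          exact absurd hg1 (by simpa using hd1pos)
        · exact h
      have hg1D : ((g1 : ℕ) : Dist) < GJ.D L.2 U.2 := by
        rcases ggap with h | h
        · rw [← h, hsplitI, hg1]
          exact dist_lt_add_right hd2pos
        · refine lt_of_lt_of_le ?_ h.2
          exact_mod_cast (show g1 < 2^(r+1) by omega)
      obtain ⟨c, hc1, hc2, hc3⟩ := GJ.ex_bot g1 hJlt hg1pos hg1D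
      have hsplitJ : GJ.D L.2 U.2 = GJ.D L.2 (eCoe c) + GJ.D (eCoe c) U.2 :=
        GJ.d_add hc1.le hc2.le
      refine ⟨c, M.insert_aux x hfx hgx i c hex L U hLS hUS hLi hiU hLmax hUmin hc1 hc2 ?_ ?_⟩
      · exact Or.inl (by rw [hg1, hc3])
      · rcases ggap with h | h
        · refine Or.inl ?_
          rw [hsplitI, hsplitJ, hg1, hc3] at h
          exact WithTop.add_left_cancel (WithTop.coe_ne_top) h
        · refine Or.inr ⟨?_, ?_⟩
          · rw [hB1]
            have hb : GI.D L.1 (eCoe i) ≤ ((2^r : ℕ) : Dist) := by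
              rw [hg1]; exact_mod_cast hg1B
            refine dist_arith (m := 2^r) (n := 2^r) ?_ hb
            rw [← hBB]
            calc ((2^(r+1) : ℕ) : Dist) ≤ GI.D L.1 U.1 := h.1
            _ = GI.D (eCoe i) U.1 + GI.D L.1 (eCoe i) := by rw [hsplitI, add_comm]
          · rw [hB1]
            have hb : GJ.D L.2 (eCoe c) ≤ ((2^r : ℕ) : Dist) := by
              rw [hc3]; exact_mod_cast hg1B
            refine dist_arith (m := 2^r) (n := 2^r) ?_ hb
            rw [← hBB]
            calc ((2^(r+1) : ℕ) : Dist) ≤ GJ.D L.2 U.2 := h.2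
            _ = GJ.D (eCoe c) U.2 + GJ.D L.2 (eCoe c) := by rw [hsplitJ, add_comm]
    · by_cases c2 : GI.D (eCoe i) U.1 ≤ ((2^r : ℕ) : Dist)
      · -- copy the upper gap exactly
        obtain ⟨g2, hg2, hg2B⟩ := dist_le_coe_cases c2
        have hg2pos : 0 < g2 := by
          rcases Nat.eq_zero_or_pos g2 with h | h
          · rw [h] at hg2
            exact absurd hg2 (by simpa using hd2pos)
          · exact h
        have hg2D : ((g2 : ℕ) : Dist) < GJ.D L.2 U.2 := by
          rcases ggap with h | h
          · rw [← h, hsplitI, hg2]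
            exact dist_lt_add_left hd1pos
          · refine lt_of_lt_of_le ?_ h.2
            exact_mod_cast (show g2 < 2^(r+1) by omega)
        obtain ⟨c, hc1, hc2, hc3⟩ := GJ.ex_top g2 hJlt hg2pos hg2D
        have hsplitJ : GJ.D L.2 U.2 = GJ.D L.2 (eCoe c) + GJ.D (eCoe c) U.2 :=
          GJ.d_add hc1.le hc2.le
        refine ⟨c, M.insert_aux x hfx hgx i c hex L U hLS hUS hLi hiU hLmax hUmin hc1 hc2 ?_ ?_⟩
        · rcases ggap with h | h
          · refine Or.inl ?_
            rw [hsplitI, hsplitJ, hg2, hc3] at h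
            exact WithTop.add_right_cancel (WithTop.coe_ne_top) h
          · refine Or.inr ⟨?_, ?_⟩
            · rw [hB1]
              have hb : GI.D (eCoe i) U.1 ≤ ((2^r : ℕ) : Dist) := by
                rw [hg2]; exact_mod_cast hg2B
              refine dist_arith (m := 2^r) (n := 2^r) ?_ hb
              rw [← hBB, ← hsplitI]
              exact h.1
            · rw [hB1]
              have hb : GJ.D (eCoe c) U.2 ≤ ((2^r : ℕ) : Dist) := by
                rw [hc3]; exact_mod_cast hg2B
              refine dist_arith (m := 2^r) (n := 2^r) ?_ hb
              rw [← hBB, ← hsplitJ]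
              exact h.2
        · exact Or.inl (by rw [hg2, hc3])
      · -- both gaps are large: go to distance `2^r` from below
        have hc1' : ((2^r : ℕ) : Dist) < GI.D L.1 (eCoe i) := not_le.1 c1
        have hc2' : ((2^r : ℕ) : Dist) < GI.D (eCoe i) U.1 := not_le.1 c2
        have hBD : ((2^r : ℕ) : Dist) < GJ.D L.2 U.2 := by
          rcases ggap with h | h
          · rw [← h, hsplitI]
            exact lt_of_lt_of_le hc1' le_self_add
          · refine lt_of_lt_of_le ?_ h.2
            exact_mod_cast (show (2:ℕ)^r < 2^(r+1) by omega)
        obtain ⟨c, hcc1, hcc2, hcc3⟩ := GJ.ex_bot (2^r) hJlt hBpos hBD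
        have hsplitJ : GJ.D L.2 U.2 = GJ.D L.2 (eCoe c) + GJ.D (eCoe c) U.2 :=
          GJ.d_add hcc1.le hcc2.le
        have hDJbig : ((2^(r+1) : ℕ) : Dist) ≤ GJ.D L.2 U.2 := by
          rcases ggap with h | h
          · rw [← h, hsplitI]
            rw [hBB]
            exact dist_add_big hc1' hc2'
          · exact h.2
        refine ⟨c, M.insert_aux x hfx hgx i c hex L U hLS hUS hLi hiU hLmax hUmin hcc1 hcc2 ?_ ?_⟩
        · refine Or.inr ⟨?_, ?_⟩
          · rw [hB1]; exact hc1'.le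
          · rw [hB1, hcc3]
        · refine Or.inr ⟨?_, ?_⟩
          · rw [hB1]; exact hc2'.le
          · rw [hB1]
            have hb : GJ.D L.2 (eCoe c) ≤ ((2^r : ℕ) : Dist) := by rw [hcc3]
            refine dist_arith (m := 2^r) (n := 2^r) ?_ hb
            rw [← hBB]
            calc ((2^(r+1) : ℕ) : Dist) ≤ GJ.D L.2 U.2 := hDJbig
            _ = GJ.D (eCoe c) U.2 + GJ.D L.2 (eCoe c) := by rw [hsplitJ, add_comm]
        
/-- The mirrored insertion lemma: inserting a point on the `J` side. -/
lemma MatchInv.insertJ {r : ℕ} {f : ℕ → Option I} {g : ℕ → Option J}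
    (hr : 1 ≤ r) (M : MatchInv GI GJ r f g) (hfin : (mpairs f g).Finite)
    (x : ℕ) (hfx : f x = none) (hgx : g x = none) (j : J) :
    ∃ i : I, MatchInv GI GJ (r - 1) (updO f x i) (updO g x j) := by
  have hfin' : (mpairs g f).Finite := by
    have : mpairs g f ⊆ Prod.swap '' mpairs f g := by
      intro z hz
      exact ⟨(z.2, z.1), mem_mpairs_swap.1 hz, rfl⟩
    exact (hfin.image Prod.swap).subset this
  obtain ⟨i, hi⟩ := MatchInv.insertI hr M.symm hfin' x hgx hfx j
  exact ⟨i, hi.symm⟩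

end InsertSec
/-! ### Order-theoretic facts about lexicographic powers -/

/-- `b` is the immediate successor of `a`. -/
def IsSuccPair {γ : Type} [LT γ] (a b : γ) : Prop := a < b ∧ ∀ c, ¬(a < c ∧ c < b)

section LexLemmas

variable {K W : Type} [LinearOrder K] [LinearOrder W]

lemma lexP_lt_iff (p q : Lex (K × W)) :
    p < q ↔ ((ofLex p).1 < (ofLex q).1 ∨
      ((ofLex p).1 = (ofLex q).1 ∧ (ofLex p).2 < (ofLex q).2)) := Prod.Lex.lt_iff

lemma lexP_le_iff (p q : Lex (K × W)) :
    p ≤ q ↔ ((ofLex p).1 < (ofLex q).1 ∨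
      ((ofLex p).1 = (ofLex q).1 ∧ (ofLex p).2 ≤ (ofLex q).2)) := Prod.Lex.le_iff

lemma lexP_isBot_iff (p : Lex (K × W)) :
    (∀ y : Lex (K × W), p ≤ y) ↔
      ((∀ k : K, (ofLex p).1 ≤ k) ∧ (∀ w : W, (ofLex p).2 ≤ w)) := by
  constructor
  · intro h
    constructor
    · intro k
      have hy := (lexP_le_iff p (toLex (k, (ofLex p).2))).1 (h _)
      simp only [ofLex_toLex] at hy
      rcases hy with hy | hy
      · exact hy.le
      · exact hy.1.le
    · intro w
      have hy := (lexP_le_iff p (toLex ((ofLex p).1, w))).1 (h _)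
      simp only [ofLex_toLex] at hy
      rcases hy with hy | hy
      · exact absurd hy (lt_irrefl _)
      · exact hy.2
  · rintro ⟨h1, h2⟩ y
    rw [lexP_le_iff]
    rcases eq_or_lt_of_le (h1 (ofLex y).1) with h | h
    · exact Or.inr ⟨h, h2 _⟩
    · exact Or.inl h

lemma lexP_isTop_iff (p : Lex (K × W)) :
    (∀ y : Lex (K × W), y ≤ p) ↔
      ((∀ k : K, k ≤ (ofLex p).1) ∧ (∀ w : W, w ≤ (ofLex p).2)) := by
  constructor
  · intro h
    constructor
    · intro k
      have hy := (lexP_le_iff (toLex (k, (ofLex p).2)) p).1 (h _)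
      simp only [ofLex_toLex] at hy
      rcases hy with hy | hy
      · exact hy.le
      · exact hy.1.le
    · intro w
      have hy := (lexP_le_iff (toLex ((ofLex p).1, w)) p).1 (h _)
      simp only [ofLex_toLex] at hy
      rcases hy with hy | hy
      · exact absurd hy (lt_irrefl _)
      · exact hy.2
  · rintro ⟨h1, h2⟩ y
    rw [lexP_le_iff]
    rcases eq_or_lt_of_le (h1 (ofLex y).1) with h | h
    · exact Or.inr ⟨h, h2 _⟩
    · exact Or.inl h

lemma lexP_succ_iff (p q : Lex (K × W)) :
    IsSuccPair p q ↔
      (((ofLex p).1 = (ofLex q).1 ∧ IsSuccPair (ofLex p).2 (ofLex q).2) ∨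
       (IsSuccPair (ofLex p).1 (ofLex q).1 ∧ (∀ w : W, w ≤ (ofLex p).2) ∧
         (∀ w : W, (ofLex q).2 ≤ w))) := by
  constructor
  · rintro ⟨hlt, hbet⟩
    rcases (lexP_lt_iff p q).1 hlt with h | h
    · refine Or.inr ⟨⟨h, ?_⟩, ?_, ?_⟩
      · rintro c ⟨h1, h2⟩
        exact hbet (toLex (c, (ofLex p).2))
          ⟨(lexP_lt_iff _ _).2 (Or.inl h1), (lexP_lt_iff _ _).2 (Or.inl h2)⟩
      · intro w
        by_contra hw
        exact hbet (toLex ((ofLex p).1, w))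
          ⟨(lexP_lt_iff _ _).2 (Or.inr ⟨rfl, not_le.1 hw⟩),
           (lexP_lt_iff _ _).2 (Or.inl h)⟩
      · intro w
        by_contra hw
        exact hbet (toLex ((ofLex q).1, w))
          ⟨(lexP_lt_iff _ _).2 (Or.inl h),
           (lexP_lt_iff _ _).2 (Or.inr ⟨rfl, not_le.1 hw⟩)⟩
    · refine Or.inl ⟨h.1, h.2, ?_⟩
      rintro c ⟨h1, h2⟩
      exact hbet (toLex ((ofLex p).1, c))
        ⟨(lexP_lt_iff _ _).2 (Or.inr ⟨rfl, h1⟩),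
         (lexP_lt_iff _ _).2 (Or.inr ⟨h.1, h2⟩)⟩
  · rintro (⟨h1, h2, h3⟩ | ⟨⟨h1, h2⟩, h3, h4⟩)
    · refine ⟨(lexP_lt_iff _ _).2 (Or.inr ⟨h1, h2⟩), ?_⟩
      rintro z ⟨hz1, hz2⟩
      rcases (lexP_lt_iff _ _).1 hz1 with ha | ha <;> rcases (lexP_lt_iff _ _).1 hz2 with hb | hb
      · have hc := ha.trans hb
        rw [h1] at hc
        exact lt_irrefl _ hc
      · rw [hb.1, ← h1] at ha
        exact lt_irrefl _ ha
      · rw [← ha.1, ← h1] at hb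
        exact lt_irrefl _ hb
      · exact h3 (ofLex z).2 ⟨ha.2, hb.2⟩
    · refine ⟨(lexP_lt_iff _ _).2 (Or.inl h1), ?_⟩
      rintro z ⟨hz1, hz2⟩
      rcases (lexP_lt_iff _ _).1 hz1 with ha | ha <;> rcases (lexP_lt_iff _ _).1 hz2 with hb | hb
      · exact h2 (ofLex z).1 ⟨ha, hb⟩
      · exact absurd (h4 (ofLex z).2) (not_le.2 hb.2)
      · exact absurd (h3 (ofLex z).2) (not_le.2 ha.2)
      · rw [ha.1, hb.1] at h1
        exact lt_irrefl _ h1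

end LexLemmas

section PowLemmas

variable (u : GWord) (T : Type) [LinearOrder T] [Countable T]

lemma pow_lt_iff (p q : (u.pow T).carrier) :
    p < q ↔ ((ofLex p).1 < (ofLex q).1 ∨
      ((ofLex p).1 = (ofLex q).1 ∧ (ofLex p).2 < (ofLex q).2)) :=
  lexP_lt_iff p q

lemma pow_le_iff (p q : (u.pow T).carrier) :
    p ≤ q ↔ ((ofLex p).1 < (ofLex q).1 ∨
      ((ofLex p).1 = (ofLex q).1 ∧ (ofLex p).2 ≤ (ofLex q).2)) :=
  lexP_le_iff p q

lemma pow_isBot_iff (p : (u.pow T).carrier) :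
    (∀ y : (u.pow T).carrier, p ≤ y) ↔
      ((∀ k : T, (ofLex p).1 ≤ k) ∧ (∀ w : u.carrier, (ofLex p).2 ≤ w)) :=
  lexP_isBot_iff p

lemma pow_isTop_iff (p : (u.pow T).carrier) :
    (∀ y : (u.pow T).carrier, y ≤ p) ↔
      ((∀ k : T, k ≤ (ofLex p).1) ∧ (∀ w : u.carrier, w ≤ (ofLex p).2)) :=
  lexP_isTop_iff p

lemma pow_succ_iff (p q : (u.pow T).carrier) :
    (p < q ∧ ∀ z : (u.pow T).carrier, ¬(p < z ∧ z < q)) ↔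
      (((ofLex p).1 = (ofLex q).1 ∧ ((ofLex p).2 < (ofLex q).2 ∧
          ∀ c : u.carrier, ¬((ofLex p).2 < c ∧ c < (ofLex q).2))) ∨
       ((IsSuccPair (ofLex p).1 (ofLex q).1) ∧ (∀ w : u.carrier, w ≤ (ofLex p).2) ∧
         (∀ w : u.carrier, (ofLex q).2 ≤ w))) :=
  lexP_succ_iff p q

lemma pow_label (p : (u.pow T).carrier) : (u.pow T).label p = u.label (ofLex p).2 := rfl

lemma pow_empty (h : IsEmpty (u.pow T).carrier) (t : T) : IsEmpty u.carrier := by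
  constructor
  intro a
  exact h.elim (toLex (t, a))

lemma pow_empty' (h : IsEmpty u.carrier) : IsEmpty (u.pow T).carrier := by
  constructor
  intro p
  exact h.elim (ofLex p).2

end PowLemmas
/-! ### Index-level transfer lemmas -/

section IdxTransfer

variable {I J : Type} [LinearOrder I] [LinearOrder J]
variable {GI : GapStruct I} {GJ : GapStruct J}

lemma MatchInv.eCoe_succ {r : ℕ} {f : ℕ → Option I} {g : ℕ → Option J}
    (M : MatchInv GI GJ r f g) {i i' : I} {j j' : J}
    (hz : (eCoe i, eCoe j) ∈ mpairs f g) (hz' : (eCoe i', eCoe j') ∈ mpairs f g)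
    (hs : IsSuccPair i i') : IsSuccPair j j' := by
  have hlt : eCoe i < eCoe i' := eCoe_lt_eCoe.2 hs.1
  have hD : GI.D (eCoe i) (eCoe i') = 1 :=
    (GI.d_one hlt).2 (fun c hc => hs.2 c ⟨eCoe_lt_eCoe.1 hc.1, eCoe_lt_eCoe.1 hc.2⟩)
  have hcons : ∀ w ∈ mpairs f g, ¬((eCoe i, eCoe j).1 < w.1 ∧ w.1 < (eCoe i', eCoe j').1) := by
    rintro w hw ⟨h1, h2⟩
    rcases hw with h | h | ⟨y, c, d, hy1, hy2, h⟩ <;> subst h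
    · exact not_lt_bot h1
    · exact not_top_lt h2
    · exact hs.2 c ⟨eCoe_lt_eCoe.1 h1, eCoe_lt_eCoe.1 h2⟩
  have hDJ := (M.2 _ hz _ hz' hlt hcons).eq_one.1 hD
  have hltJ : eCoe j < eCoe j' := (M.1 _ hz _ hz').1 hlt
  have hbet := (GJ.d_one hltJ).1 hDJ
  exact ⟨eCoe_lt_eCoe.1 hltJ,
    fun c hc => hbet c ⟨eCoe_lt_eCoe.2 hc.1, eCoe_lt_eCoe.2 hc.2⟩⟩

lemma MatchInv.eCoe_succ' {r : ℕ} {f : ℕ → Option I} {g : ℕ → Option J}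
    (M : MatchInv GI GJ r f g) {i i' : I} {j j' : J}
    (hz : (eCoe i, eCoe j) ∈ mpairs f g) (hz' : (eCoe i', eCoe j') ∈ mpairs f g)
    (hs : IsSuccPair j j') : IsSuccPair i i' :=
  M.symm.eCoe_succ (mem_mpairs_swap.2 hz) (mem_mpairs_swap.2 hz') hs

lemma MatchInv.eCoe_bot {r : ℕ} {f : ℕ → Option I} {g : ℕ → Option J}
    (M : MatchInv GI GJ r f g) {i : I} {j : J}
    (hz : (eCoe i, eCoe j) ∈ mpairs f g) (hb : ∀ k : I, i ≤ k) : ∀ k : J, j ≤ k := by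
  have hlt : (⊥ : EInd I) < eCoe i := bot_lt_eCoe i
  have hD : GI.D ⊥ (eCoe i) = 1 :=
    (GI.d_one hlt).2 (fun c hc => absurd (hb c) (not_le.2 (eCoe_lt_eCoe.1 hc.2)))
  have hcons : ∀ w ∈ mpairs f g,
      ¬(((⊥ : EInd I), (⊥ : EInd J)).1 < w.1 ∧ w.1 < (eCoe i, eCoe j).1) := by
    rintro w hw ⟨h1, h2⟩
    rcases hw with h | h | ⟨y, c, d, hy1, hy2, h⟩ <;> subst h
    · exact lt_irrefl _ h1
    · exact not_top_lt h2
    · exact absurd (hb c) (not_le.2 (eCoe_lt_eCoe.1 h2))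
  have hDJ := (M.2 _ (bot_mem_mpairs f g) _ hz hlt hcons).eq_one.1 hD
  have hltJ : (⊥ : EInd J) < eCoe j :=
    (M.1 _ (bot_mem_mpairs f g) _ hz).1 hlt
  have hbet := (GJ.d_one hltJ).1 hDJ
  intro k
  by_contra hk
  exact hbet k ⟨bot_lt_eCoe k, eCoe_lt_eCoe.2 (not_le.1 hk)⟩

lemma MatchInv.eCoe_bot' {r : ℕ} {f : ℕ → Option I} {g : ℕ → Option J}
    (M : MatchInv GI GJ r f g) {i : I} {j : J}
    (hz : (eCoe i, eCoe j) ∈ mpairs f g) (hb : ∀ k : J, j ≤ k) : ∀ k : I, i ≤ k :=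
  M.symm.eCoe_bot (mem_mpairs_swap.2 hz) hb

lemma MatchInv.eCoe_top {r : ℕ} {f : ℕ → Option I} {g : ℕ → Option J}
    (M : MatchInv GI GJ r f g) {i : I} {j : J}
    (hz : (eCoe i, eCoe j) ∈ mpairs f g) (hb : ∀ k : I, k ≤ i) : ∀ k : J, k ≤ j := by
  have hlt : eCoe i < (⊤ : EInd I) := eCoe_lt_top i
  have hD : GI.D (eCoe i) ⊤ = 1 :=
    (GI.d_one hlt).2 (fun c hc => absurd (hb c) (not_le.2 (eCoe_lt_eCoe.1 hc.1)))
  have hcons : ∀ w ∈ mpairs f g,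
      ¬((eCoe i, eCoe j).1 < w.1 ∧ w.1 < (((⊤ : EInd I), (⊤ : EInd J))).1) := by
    rintro w hw ⟨h1, h2⟩
    rcases hw with h | h | ⟨y, c, d, hy1, hy2, h⟩ <;> subst h
    · exact not_lt_bot h1
    · exact lt_irrefl _ h2
    · exact absurd (hb c) (not_le.2 (eCoe_lt_eCoe.1 h1))
  have hDJ := (M.2 _ hz _ (top_mem_mpairs f g) hlt hcons).eq_one.1 hD
  have hltJ : eCoe j < (⊤ : EInd J) :=
    (M.1 _ hz _ (top_mem_mpairs f g)).1 hlt
  have hbet := (GJ.d_one hltJ).1 hDJ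
  intro k
  by_contra hk
  exact hbet k ⟨eCoe_lt_eCoe.2 (not_le.1 hk), eCoe_lt_top k⟩

lemma MatchInv.eCoe_top' {r : ℕ} {f : ℕ → Option I} {g : ℕ → Option J}
    (M : MatchInv GI GJ r f g) {i : I} {j : J}
    (hz : (eCoe i, eCoe j) ∈ mpairs f g) (hb : ∀ k : J, k ≤ j) : ∀ k : I, k ≤ i :=
  M.symm.eCoe_top (mem_mpairs_swap.2 hz) hb

end IdxTransfer

/-! ### The composite invariant for the power game -/

/-- The index component of a valuation on a power word. -/
def pIdx {u : GWord} {T : Type} [LinearOrder T] [Countable T]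
    (val : ℕ → Option (u.pow T).carrier) : ℕ → Option T :=
  fun x => (val x).map fun p => (ofLex p).1

lemma pIdx_some {u : GWord} {T : Type} [LinearOrder T] [Countable T]
    {val : ℕ → Option (u.pow T).carrier} {x : ℕ} {p : (u.pow T).carrier}
    (h : val x = some p) : pIdx val x = some (ofLex p).1 := by
  unfold pIdx
  rw [h]
  rfl

section CoreInv

variable {I J : Type} [LinearOrder I] [LinearOrder J] [Countable I] [Countable J]

/-- The invariant maintained by Duplicator in the power game: sub-valuation families
for each copy on the `I`-side, related to the global valuations, together with the
matching invariant on the index components. -/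
structure PowInv (GI : GapStruct I) (GJ : GapStruct J) (wa wb : GWord)
    (R : Set FOForm → (ℕ → Option wa.carrier) → (ℕ → Option wb.carrier) → Prop)
    (G : Set FOForm) (r : ℕ)
    (valA : ℕ → Option (wa.pow I).carrier) (valB : ℕ → Option (wb.pow J).carrier)
    (α : I → ℕ → Option wa.carrier) (β : I → ℕ → Option wb.carrier) : Prop where
  sucG : SucStable G
  qdG : ∀ φ ∈ G, φ.qd ≤ r
  fin : ∃ V : Finset ℕ, ∀ x, (valA x).isSome ↔ x ∈ V
  domAB : ∀ x, (valA x).isSome ↔ (valB x).isSome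
  domSubA : ∀ i x, ((α i x).isSome ↔ (valA x).isSome)
  domSubB : ∀ i x, ((β i x).isSome ↔ (valA x).isSome)
  subR : ∀ i, R G (α i) (β i)
  native : ∀ x p, valA x = some p → α (ofLex p).1 x = some (ofLex p).2 ∧
      ∃ q, valB x = some q ∧ β (ofLex p).1 x = some (ofLex q).2
  mat : MatchInv GI GJ r (pIdx valA) (pIdx valB)

namespace PowInv

variable {GI : GapStruct I} {GJ : GapStruct J} {wa wb : GWord}
variable {R : Set FOForm → (ℕ → Option wa.carrier) → (ℕ → Option wb.carrier) → Prop}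
variable {G : Set FOForm} {r : ℕ}
variable {valA : ℕ → Option (wa.pow I).carrier} {valB : ℕ → Option (wb.pow J).carrier}
variable {α : I → ℕ → Option wa.carrier} {β : I → ℕ → Option wb.carrier}

/-- All data attached to a variable defined on the `A` side. -/
lemma var_data (P : PowInv GI GJ wa wb R G r valA valB α β) {x : ℕ}
    {p : (wa.pow I).carrier} (h : valA x = some p) :
    ∃ q, valB x = some q ∧ α (ofLex p).1 x = some (ofLex p).2 ∧
      β (ofLex p).1 x = some (ofLex q).2 ∧
      (eCoe (ofLex p).1, eCoe (ofLex q).1) ∈ mpairs (pIdx valA) (pIdx valB) := by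
  obtain ⟨ha, q, hq, hb⟩ := P.native x p h
  exact ⟨q, hq, ha, hb, pair_mem_mpairs (pIdx_some h) (pIdx_some hq)⟩

/-- All data attached to a variable defined on the `B` side. -/
lemma var_dataB (P : PowInv GI GJ wa wb R G r valA valB α β) {x : ℕ}
    {q : (wb.pow J).carrier} (h : valB x = some q) :
    ∃ p, valA x = some p ∧ α (ofLex p).1 x = some (ofLex p).2 ∧
      β (ofLex p).1 x = some (ofLex q).2 ∧
      (eCoe (ofLex p).1, eCoe (ofLex q).1) ∈ mpairs (pIdx valA) (pIdx valB) := by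
  have hA : (valA x).isSome := (P.domAB x).2 (by rw [h]; rfl)
  obtain ⟨p, hp⟩ := Option.isSome_iff_exists.1 hA
  obtain ⟨q', hq', ha, hb, hm⟩ := P.var_data hp
  rw [h] at hq'
  injection hq' with hq'
  subst hq'
  exact ⟨p, hp, ha, hb, hm⟩

lemma idx_lt_iff (P : PowInv GI GJ wa wb R G r valA valB α β)
    {x y : ℕ} {p q : (wa.pow I).carrier} {p' q' : (wb.pow J).carrier}
    (hx : valA x = some p) (hx' : valB x = some p')
    (hy : valA y = some q) (hy' : valB y = some q') :
    ((ofLex p).1 < (ofLex q).1 ↔ (ofLex p').1 < (ofLex q').1) := by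
  have h1 := pair_mem_mpairs (pIdx_some hx) (pIdx_some hx')
  have h2 := pair_mem_mpairs (pIdx_some hy) (pIdx_some hy')
  have := P.mat.1 _ h1 _ h2
  simpa [eCoe_lt_eCoe] using this

lemma idx_eq_iff (P : PowInv GI GJ wa wb R G r valA valB α β)
    {x y : ℕ} {p q : (wa.pow I).carrier} {p' q' : (wb.pow J).carrier}
    (hx : valA x = some p) (hx' : valB x = some p')
    (hy : valA y = some q) (hy' : valB y = some q') :
    ((ofLex p).1 = (ofLex q).1 ↔ (ofLex p').1 = (ofLex q').1) := by
  have h1 := pair_mem_mpairs (pIdx_some hx) (pIdx_some hx')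
  have h2 := pair_mem_mpairs (pIdx_some hy) (pIdx_some hy')
  have := P.mat.eq_iff h1 h2
  constructor
  · intro h
    exact eCoe_inj (this.1 (by rw [h]))
  · intro h
    exact eCoe_inj (this.2 (by rw [h]))

end PowInv

end CoreInv
section NoWin

variable {I J : Type} [LinearOrder I] [LinearOrder J] [Countable I] [Countable J]
variable {GI : GapStruct I} {GJ : GapStruct J} {wa wb : GWord}
variable {R : Set FOForm → (ℕ → Option wa.carrier) → (ℕ → Option wb.carrier) → Prop}
variable {G : Set FOForm} {r : ℕ}
variable {valA : ℕ → Option (wa.pow I).carrier} {valB : ℕ → Option (wb.pow J).carrier}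
variable {α : I → ℕ → Option wa.carrier} {β : I → ℕ → Option wb.carrier}

lemma PowInv.nowin_A (P : PowInv GI GJ wa wb R G r valA valB α β)
    (hsub : ∀ i : I, ¬ SpoilerWinsNow ⟨G, wa, wb, α i, β i⟩)
    (hI : Nonempty I) (hJ : Nonempty J) :
    ¬ SpoilerWinsNow ⟨G, wa.pow I, wb.pow J, valA, valB⟩ := by
  rintro ⟨φ, hφG, hlit, hFV, hS1, hS2⟩
  have transAB : ∀ (i : I) (ψ : FOForm), ψ ∈ G → ψ.IsAtomic →
      (∀ y ∈ ψ.FV, (α i y).isSome) → wa.Sat (α i) ψ → wb.Sat (β i) ψ := by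
    intro i ψ h1 h2 h3 h4
    by_contra h5
    exact hsub i ⟨ψ, h1, Or.inl h2, h3, h4, h5⟩
  have transBA : ∀ (i : I) (ψ : FOForm), (FOForm.not ψ) ∈ G → ψ.IsAtomic →
      (∀ y ∈ ψ.FV, (α i y).isSome) → wb.Sat (β i) ψ → wa.Sat (α i) ψ := by
    intro i ψ h1 h2 h3 h4
    by_contra h5
    exact hsub i ⟨FOForm.not ψ, h1, Or.inr ⟨ψ, h2, rfl⟩, h3, h5, fun h6 => h6 h4⟩
  rcases hlit with hat | ⟨ψ, hat, rfl⟩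
  · -- positive atomic literal
    cases φ with
    | top => exact hS2 trivial
    | bot => exact hS1
    | empt =>
        obtain ⟨i0⟩ := hI
        have hae : IsEmpty wa.carrier := pow_empty wa I hS1 i0
        have hSb : wb.Sat (β i0) FOForm.empt :=
          transAB i0 _ hφG trivial (by intro y hy; simp [FOForm.FV] at hy) hae
        exact hS2 (pow_empty' wb J hSb)
    | eq x y =>
        obtain ⟨p, q, hx, hy, hpq⟩ := hS1
        subst hpq
        obtain ⟨p', hx', hax, hbx, hmx⟩ := P.var_data hx
        obtain ⟨q', hy', hay, hby, hmy⟩ := P.var_data hy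
        have hjeq : (ofLex p').1 = (ofLex q').1 := (P.idx_eq_iff hx hx' hy hy').1 rfl
        have hSb := transAB (ofLex p).1 _ hφG trivial
          (by intro yy hyy; simp [FOForm.FV] at hyy
              rcases hyy with rfl | rfl
              · rw [hax]; rfl
              · rw [hay]; rfl)
          ⟨(ofLex p).2, (ofLex p).2, hax, hay, rfl⟩
        obtain ⟨b1, b2, hbx2, hby2, hbeq⟩ := hSb
        rw [hbx] at hbx2
        injection hbx2 with hbx2
        subst hbx2
        rw [hby] at hby2
        injection hby2 with hby2
        subst hby2
        exact hS2 ⟨p', q', hx', hy', ofLex.injective (Prod.ext hjeq hbeq)⟩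
    | lab x a =>
        obtain ⟨p, hx, hlab⟩ := hS1
        obtain ⟨p', hx', hax, hbx, hmx⟩ := P.var_data hx
        have hSb := transAB (ofLex p).1 _ hφG trivial
          (by intro yy hyy; simp [FOForm.FV] at hyy; subst hyy; rw [hax]; rfl)
          ⟨(ofLex p).2, hax, hlab⟩
        obtain ⟨b, hbx2, hblab⟩ := hSb
        rw [hbx] at hbx2
        injection hbx2 with hbx2
        subst hbx2
        exact hS2 ⟨p', hx', hblab⟩
    | lt x y =>
        obtain ⟨p, q, hx, hy, hpq⟩ := hS1
        obtain ⟨p', hx', hax, hbx, hmx⟩ := P.var_data hx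
        obtain ⟨q', hy', hay, hby, hmy⟩ := P.var_data hy
        rcases (pow_lt_iff wa I p q).1 hpq with hc | hc
        · exact hS2 ⟨p', q', hx', hy', (pow_lt_iff wb J p' q').2
            (Or.inl ((P.idx_lt_iff hx hx' hy hy').1 hc))⟩
        · have hjeq : (ofLex p').1 = (ofLex q').1 := (P.idx_eq_iff hx hx' hy hy').1 hc.1
          rw [← hc.1] at hay hby
          have hSb := transAB (ofLex p).1 _ hφG trivial
            (by intro yy hyy; simp [FOForm.FV] at hyy
                rcases hyy with rfl | rfl
                · rw [hax]; rfl
                · rw [hay]; rfl)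
            ⟨(ofLex p).2, (ofLex q).2, hax, hay, hc.2⟩
          obtain ⟨b1, b2, hbx2, hby2, hblt⟩ := hSb
          rw [hbx] at hbx2
          injection hbx2 with hbx2
          subst hbx2
          rw [hby] at hby2
          injection hby2 with hby2
          subst hby2
          exact hS2 ⟨p', q', hx', hy', (pow_lt_iff wb J p' q').2 (Or.inr ⟨hjeq, hblt⟩)⟩
    | le x y =>
        obtain ⟨p, q, hx, hy, hpq⟩ := hS1
        obtain ⟨p', hx', hax, hbx, hmx⟩ := P.var_data hx
        obtain ⟨q', hy', hay, hby, hmy⟩ := P.var_data hy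
        rcases (pow_le_iff wa I p q).1 hpq with hc | hc
        · exact hS2 ⟨p', q', hx', hy', (pow_le_iff wb J p' q').2
            (Or.inl ((P.idx_lt_iff hx hx' hy hy').1 hc))⟩
        · have hjeq : (ofLex p').1 = (ofLex q').1 := (P.idx_eq_iff hx hx' hy hy').1 hc.1
          rw [← hc.1] at hay hby
          have hSb := transAB (ofLex p).1 _ hφG trivial
            (by intro yy hyy; simp [FOForm.FV] at hyy
                rcases hyy with rfl | rfl
                · rw [hax]; rfl
                · rw [hay]; rfl)
            ⟨(ofLex p).2, (ofLex q).2, hax, hay, hc.2⟩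
          obtain ⟨b1, b2, hbx2, hby2, hble⟩ := hSb
          rw [hbx] at hbx2
          injection hbx2 with hbx2
          subst hbx2
          rw [hby] at hby2
          injection hby2 with hby2
          subst hby2
          exact hS2 ⟨p', q', hx', hy', (pow_le_iff wb J p' q').2 (Or.inr ⟨hjeq, hble⟩)⟩
    | suc x y =>
        obtain ⟨p, q, hx, hy, hpq, hbet⟩ := hS1
        obtain ⟨p', hx', hax, hbx, hmx⟩ := P.var_data hx
        obtain ⟨q', hy', hay, hby, hmy⟩ := P.var_data hy
        rcases (pow_succ_iff wa I p q).1 ⟨hpq, hbet⟩ with ⟨hieq, hin⟩ | ⟨hisucc, htop, hbot⟩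
        · have hjeq : (ofLex p').1 = (ofLex q').1 := (P.idx_eq_iff hx hx' hy hy').1 hieq
          rw [← hieq] at hay hby
          have hSb := transAB (ofLex p).1 _ hφG trivial
            (by intro yy hyy; simp [FOForm.FV] at hyy
                rcases hyy with rfl | rfl
                · rw [hax]; rfl
                · rw [hay]; rfl)
            ⟨(ofLex p).2, (ofLex q).2, hax, hay, hin.1, hin.2⟩
          obtain ⟨b1, b2, hbx2, hby2, hblt, hbbet⟩ := hSb
          rw [hbx] at hbx2
          injection hbx2 with hbx2
          subst hbx2
          rw [hby] at hby2
          injection hby2 with hby2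
          subst hby2
          have hcc := (pow_succ_iff wb J p' q').2 (Or.inl ⟨hjeq, hblt, hbbet⟩)
          exact hS2 ⟨p', q', hx', hy', hcc.1, hcc.2⟩
        · have hjsucc := P.mat.eCoe_succ hmx hmy hisucc
          obtain ⟨hEqG, hMaxG, hMinG⟩ := P.sucG.1 FOCtx.hole x y hφG
          have hSmax := transAB (ofLex p).1 (FOForm.fmax x) hMaxG trivial
            (by intro yy hyy; simp [FOForm.FV] at hyy; subst hyy; rw [hax]; rfl)
            ⟨(ofLex p).2, hax, htop⟩
          obtain ⟨b1, hbx2, hbtop⟩ := hSmax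
          rw [hbx] at hbx2
          injection hbx2 with hbx2
          subst hbx2
          have hSmin := transAB (ofLex q).1 (FOForm.fmin y) hMinG trivial
            (by intro yy hyy; simp [FOForm.FV] at hyy; subst hyy; rw [hay]; rfl)
            ⟨(ofLex q).2, hay, hbot⟩
          obtain ⟨b2, hby2, hbbot⟩ := hSmin
          rw [hby] at hby2
          injection hby2 with hby2
          subst hby2
          have hcc := (pow_succ_iff wb J p' q').2 (Or.inr ⟨hjsucc, hbtop, hbbot⟩)
          exact hS2 ⟨p', q', hx', hy', hcc.1, hcc.2⟩
    | fmin x =>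
        obtain ⟨p, hx, hball⟩ := hS1
        obtain ⟨p', hx', hax, hbx, hmx⟩ := P.var_data hx
        obtain ⟨hib, hwbot⟩ := (pow_isBot_iff wa I p).1 hball
        have hjb := P.mat.eCoe_bot hmx hib
        have hSb := transAB (ofLex p).1 _ hφG trivial
          (by intro yy hyy; simp [FOForm.FV] at hyy; subst hyy; rw [hax]; rfl)
          ⟨(ofLex p).2, hax, hwbot⟩
        obtain ⟨b, hbx2, hbb⟩ := hSb
        rw [hbx] at hbx2
        injection hbx2 with hbx2
        subst hbx2
        exact hS2 ⟨p', hx', (pow_isBot_iff wb J p').2 ⟨hjb, hbb⟩⟩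
    | fmax x =>
        obtain ⟨p, hx, hball⟩ := hS1
        obtain ⟨p', hx', hax, hbx, hmx⟩ := P.var_data hx
        obtain ⟨hit, hwtop⟩ := (pow_isTop_iff wa I p).1 hball
        have hjt := P.mat.eCoe_top hmx hit
        have hSb := transAB (ofLex p).1 _ hφG trivial
          (by intro yy hyy; simp [FOForm.FV] at hyy; subst hyy; rw [hax]; rfl)
          ⟨(ofLex p).2, hax, hwtop⟩
        obtain ⟨b, hbx2, hbb⟩ := hSb
        rw [hbx] at hbx2
        injection hbx2 with hbx2
        subst hbx2
        exact hS2 ⟨p', hx', (pow_isTop_iff wb J p').2 ⟨hjt, hbb⟩⟩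
    | not ψ => simp [FOForm.IsAtomic] at hat
    | or φ1 φ2 => simp [FOForm.IsAtomic] at hat
    | and φ1 φ2 => simp [FOForm.IsAtomic] at hat
    | ex z φ1 => simp [FOForm.IsAtomic] at hat
    | all z φ1 => simp [FOForm.IsAtomic] at hat
  · -- negated atomic literal
    have hS2' : (wb.pow J).Sat valB ψ := by
      by_contra hc
      exact hS2 hc
    cases ψ with
    | top => exact hS1 trivial
    | bot => exact hS2'
    | empt =>
        obtain ⟨i0⟩ := hI
        obtain ⟨j0⟩ := hJ
        have hbe : IsEmpty wb.carrier := pow_empty wb J hS2' j0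
        have hSa := transBA i0 FOForm.empt hφG trivial
          (by intro y hy; simp [FOForm.FV] at hy) hbe
        exact hS1 (pow_empty' wa I hSa)
    | eq x y =>
        obtain ⟨p', q', hx', hy', hbeq⟩ := hS2'
        subst hbeq
        obtain ⟨p, hx, hax, hbx, hmx⟩ := P.var_dataB hx'
        obtain ⟨q, hy, hay, hby, hmy⟩ := P.var_dataB hy'
        have hieq : (ofLex p).1 = (ofLex q).1 := (P.idx_eq_iff hx hx' hy hy').2 rfl
        rw [← hieq] at hay hby
        have hSa := transBA (ofLex p).1 _ hφG trivial
          (by intro yy hyy; simp [FOForm.FV] at hyy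
              rcases hyy with rfl | rfl
              · rw [hax]; rfl
              · rw [hay]; rfl)
          ⟨(ofLex p').2, (ofLex p').2, hbx, hby, rfl⟩
        obtain ⟨a1, a2, hax2, hay2, haeq⟩ := hSa
        rw [hax] at hax2
        injection hax2 with hax2
        subst hax2
        rw [hay] at hay2
        injection hay2 with hay2
        subst hay2
        exact hS1 ⟨p, q, hx, hy, ofLex.injective (Prod.ext hieq haeq)⟩
    | lab x a =>
        obtain ⟨p', hx', hblab⟩ := hS2'
        obtain ⟨p, hx, hax, hbx, hmx⟩ := P.var_dataB hx'
        have hSa := transBA (ofLex p).1 _ hφG trivial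
          (by intro yy hyy; simp [FOForm.FV] at hyy; subst hyy; rw [hax]; rfl)
          ⟨(ofLex p').2, hbx, hblab⟩
        obtain ⟨a1, hax2, halab⟩ := hSa
        rw [hax] at hax2
        injection hax2 with hax2
        subst hax2
        exact hS1 ⟨p, hx, halab⟩
    | lt x y =>
        obtain ⟨p', q', hx', hy', hblt⟩ := hS2'
        obtain ⟨p, hx, hax, hbx, hmx⟩ := P.var_dataB hx'
        obtain ⟨q, hy, hay, hby, hmy⟩ := P.var_dataB hy'
        rcases (pow_lt_iff wb J p' q').1 hblt with hc | hc
        · exact hS1 ⟨p, q, hx, hy, (pow_lt_iff wa I p q).2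
            (Or.inl ((P.idx_lt_iff hx hx' hy hy').2 hc))⟩
        · have hieq : (ofLex p).1 = (ofLex q).1 := (P.idx_eq_iff hx hx' hy hy').2 hc.1
          rw [← hieq] at hay hby
          have hSa := transBA (ofLex p).1 _ hφG trivial
            (by intro yy hyy; simp [FOForm.FV] at hyy
                rcases hyy with rfl | rfl
                · rw [hax]; rfl
                · rw [hay]; rfl)
            ⟨(ofLex p').2, (ofLex q').2, hbx, hby, hc.2⟩
          obtain ⟨a1, a2, hax2, hay2, halt⟩ := hSa
          rw [hax] at hax2
          injection hax2 with hax2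
          subst hax2
          rw [hay] at hay2
          injection hay2 with hay2
          subst hay2
          exact hS1 ⟨p, q, hx, hy, (pow_lt_iff wa I p q).2 (Or.inr ⟨hieq, halt⟩)⟩
    | le x y =>
        obtain ⟨p', q', hx', hy', hble⟩ := hS2'
        obtain ⟨p, hx, hax, hbx, hmx⟩ := P.var_dataB hx'
        obtain ⟨q, hy, hay, hby, hmy⟩ := P.var_dataB hy'
        rcases (pow_le_iff wb J p' q').1 hble with hc | hc
        · exact hS1 ⟨p, q, hx, hy, (pow_le_iff wa I p q).2
            (Or.inl ((P.idx_lt_iff hx hx' hy hy').2 hc))⟩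
        · have hieq : (ofLex p).1 = (ofLex q).1 := (P.idx_eq_iff hx hx' hy hy').2 hc.1
          rw [← hieq] at hay hby
          have hSa := transBA (ofLex p).1 _ hφG trivial
            (by intro yy hyy; simp [FOForm.FV] at hyy
                rcases hyy with rfl | rfl
                · rw [hax]; rfl
                · rw [hay]; rfl)
            ⟨(ofLex p').2, (ofLex q').2, hbx, hby, hc.2⟩
          obtain ⟨a1, a2, hax2, hay2, hale⟩ := hSa
          rw [hax] at hax2
          injection hax2 with hax2
          subst hax2
          rw [hay] at hay2
          injection hay2 with hay2
          subst hay2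
          exact hS1 ⟨p, q, hx, hy, (pow_le_iff wa I p q).2 (Or.inr ⟨hieq, hale⟩)⟩
    | suc x y =>
        obtain ⟨p', q', hx', hy', hblt, hbbet⟩ := hS2'
        obtain ⟨p, hx, hax, hbx, hmx⟩ := P.var_dataB hx'
        obtain ⟨q, hy, hay, hby, hmy⟩ := P.var_dataB hy'
        rcases (pow_succ_iff wb J p' q').1 ⟨hblt, hbbet⟩ with ⟨hjeq, hin⟩ |
          ⟨hjsucc, hbtop, hbbot⟩
        · have hieq : (ofLex p).1 = (ofLex q).1 := (P.idx_eq_iff hx hx' hy hy').2 hjeq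
          rw [← hieq] at hay hby
          have hSa := transBA (ofLex p).1 _ hφG trivial
            (by intro yy hyy; simp [FOForm.FV] at hyy
                rcases hyy with rfl | rfl
                · rw [hax]; rfl
                · rw [hay]; rfl)
            ⟨(ofLex p').2, (ofLex q').2, hbx, hby, hin.1, hin.2⟩
          obtain ⟨a1, a2, hax2, hay2, halt, habet⟩ := hSa
          rw [hax] at hax2
          injection hax2 with hax2
          subst hax2
          rw [hay] at hay2
          injection hay2 with hay2
          subst hay2
          have hcc := (pow_succ_iff wa I p q).2 (Or.inl ⟨hieq, halt, habet⟩)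
          exact hS1 ⟨p, q, hx, hy, hcc.1, hcc.2⟩
        · have hisucc := P.mat.eCoe_succ' hmx hmy hjsucc
          obtain ⟨hEqG, hMaxG, hMinG⟩ := P.sucG.1 (FOCtx.notC FOCtx.hole) x y hφG
          have hSamax := transBA (ofLex p).1 (FOForm.fmax x) hMaxG trivial
            (by intro yy hyy; simp [FOForm.FV] at hyy; subst hyy; rw [hax]; rfl)
            ⟨(ofLex p').2, hbx, hbtop⟩
          obtain ⟨a1, hax2, hatop⟩ := hSamax
          rw [hax] at hax2
          injection hax2 with hax2
          subst hax2
          have hSamin := transBA (ofLex q).1 (FOForm.fmin y) hMinG trivial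
            (by intro yy hyy; simp [FOForm.FV] at hyy; subst hyy; rw [hay]; rfl)
            ⟨(ofLex q').2, hby, hbbot⟩
          obtain ⟨a2, hay2, habot⟩ := hSamin
          rw [hay] at hay2
          injection hay2 with hay2
          subst hay2
          have hcc := (pow_succ_iff wa I p q).2 (Or.inr ⟨hisucc, hatop, habot⟩)
          exact hS1 ⟨p, q, hx, hy, hcc.1, hcc.2⟩
    | fmin x =>
        obtain ⟨p', hx', hball⟩ := hS2'
        obtain ⟨p, hx, hax, hbx, hmx⟩ := P.var_dataB hx'
        obtain ⟨hjb, hwbot⟩ := (pow_isBot_iff wb J p').1 hball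
        have hib := P.mat.eCoe_bot' hmx hjb
        have hSa := transBA (ofLex p).1 _ hφG trivial
          (by intro yy hyy; simp [FOForm.FV] at hyy; subst hyy; rw [hax]; rfl)
          ⟨(ofLex p').2, hbx, hwbot⟩
        obtain ⟨a1, hax2, hab⟩ := hSa
        rw [hax] at hax2
        injection hax2 with hax2
        subst hax2
        exact hS1 ⟨p, hx, (pow_isBot_iff wa I p).2 ⟨hib, hab⟩⟩
    | fmax x =>
        obtain ⟨p', hx', hball⟩ := hS2'
        obtain ⟨p, hx, hax, hbx, hmx⟩ := P.var_dataB hx'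
        obtain ⟨hjt, hwtop⟩ := (pow_isTop_iff wb J p').1 hball
        have hit := P.mat.eCoe_top' hmx hjt
        have hSa := transBA (ofLex p).1 _ hφG trivial
          (by intro yy hyy; simp [FOForm.FV] at hyy; subst hyy; rw [hax]; rfl)
          ⟨(ofLex p').2, hbx, hwtop⟩
        obtain ⟨a1, hax2, hab⟩ := hSa
        rw [hax] at hax2
        injection hax2 with hax2
        subst hax2
        exact hS1 ⟨p, hx, (pow_isTop_iff wa I p).2 ⟨hit, hab⟩⟩
    | not ψ1 => simp [FOForm.IsAtomic] at hat
    | or φ1 φ2 => simp [FOForm.IsAtomic] at hat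
    | and φ1 φ2 => simp [FOForm.IsAtomic] at hat
    | ex z φ1 => simp [FOForm.IsAtomic] at hat
    | all z φ1 => simp [FOForm.IsAtomic] at hat


lemma PowInv.nowin_B (P : PowInv GI GJ wa wb R G r valA valB α β)
    (hsub : ∀ i : I, ¬ SpoilerWinsNow ⟨G, wb, wa, β i, α i⟩)
    (hI : Nonempty I) (hJ : Nonempty J) :
    ¬ SpoilerWinsNow ⟨G, wb.pow J, wa.pow I, valB, valA⟩ := by
  rintro ⟨φ, hφG, hlit, hFV, hS1, hS2⟩
  have transBA2 : ∀ (i : I) (ψ : FOForm), ψ ∈ G → ψ.IsAtomic →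
      (∀ y ∈ ψ.FV, (β i y).isSome) → wb.Sat (β i) ψ → wa.Sat (α i) ψ := by
    intro i ψ h1 h2 h3 h4
    by_contra h5
    exact hsub i ⟨ψ, h1, Or.inl h2, h3, h4, h5⟩
  have transAB2 : ∀ (i : I) (ψ : FOForm), (FOForm.not ψ) ∈ G → ψ.IsAtomic →
      (∀ y ∈ ψ.FV, (β i y).isSome) → wa.Sat (α i) ψ → wb.Sat (β i) ψ := by
    intro i ψ h1 h2 h3 h4
    by_contra h5
    exact hsub i ⟨FOForm.not ψ, h1, Or.inr ⟨ψ, h2, rfl⟩, h3, h5, fun h6 => h6 h4⟩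
  rcases hlit with hat | ⟨ψ, hat, rfl⟩
  · -- positive atomic literal (true in the B power word)
    cases φ with
    | top => exact hS2 trivial
    | bot => exact hS1
    | empt =>
        obtain ⟨i0⟩ := hI
        obtain ⟨j0⟩ := hJ
        have hbe : IsEmpty wb.carrier := pow_empty wb J hS1 j0
        have hSa := transBA2 i0 FOForm.empt hφG trivial
          (by intro y hy; simp [FOForm.FV] at hy) hbe
        exact hS2 (pow_empty' wa I hSa)
    | eq x y =>
        obtain ⟨p', q', hx', hy', hbeq⟩ := hS1
        subst hbeq
        obtain ⟨p, hx, hax, hbx, hmx⟩ := P.var_dataB hx'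
        obtain ⟨q, hy, hay, hby, hmy⟩ := P.var_dataB hy'
        have hieq : (ofLex p).1 = (ofLex q).1 := (P.idx_eq_iff hx hx' hy hy').2 rfl
        rw [← hieq] at hay hby
        have hSa := transBA2 (ofLex p).1 _ hφG trivial
          (by intro yy hyy; simp [FOForm.FV] at hyy
              rcases hyy with rfl | rfl
              · rw [hbx]; rfl
              · rw [hby]; rfl)
          ⟨(ofLex p').2, (ofLex p').2, hbx, hby, rfl⟩
        obtain ⟨a1, a2, hax2, hay2, haeq⟩ := hSa
        rw [hax] at hax2
        injection hax2 with hax2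
        subst hax2
        rw [hay] at hay2
        injection hay2 with hay2
        subst hay2
        exact hS2 ⟨p, q, hx, hy, ofLex.injective (Prod.ext hieq haeq)⟩
    | lab x a =>
        obtain ⟨p', hx', hblab⟩ := hS1
        obtain ⟨p, hx, hax, hbx, hmx⟩ := P.var_dataB hx'
        have hSa := transBA2 (ofLex p).1 _ hφG trivial
          (by intro yy hyy; simp [FOForm.FV] at hyy; subst hyy; rw [hbx]; rfl)
          ⟨(ofLex p').2, hbx, hblab⟩
        obtain ⟨a1, hax2, halab⟩ := hSa
        rw [hax] at hax2
        injection hax2 with hax2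
        subst hax2
        exact hS2 ⟨p, hx, halab⟩
    | lt x y =>
        obtain ⟨p', q', hx', hy', hblt⟩ := hS1
        obtain ⟨p, hx, hax, hbx, hmx⟩ := P.var_dataB hx'
        obtain ⟨q, hy, hay, hby, hmy⟩ := P.var_dataB hy'
        rcases (pow_lt_iff wb J p' q').1 hblt with hc | hc
        · exact hS2 ⟨p, q, hx, hy, (pow_lt_iff wa I p q).2
            (Or.inl ((P.idx_lt_iff hx hx' hy hy').2 hc))⟩
        · have hieq : (ofLex p).1 = (ofLex q).1 := (P.idx_eq_iff hx hx' hy hy').2 hc.1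
          rw [← hieq] at hay hby
          have hSa := transBA2 (ofLex p).1 _ hφG trivial
            (by intro yy hyy; simp [FOForm.FV] at hyy
                rcases hyy with rfl | rfl
                · rw [hbx]; rfl
                · rw [hby]; rfl)
            ⟨(ofLex p').2, (ofLex q').2, hbx, hby, hc.2⟩
          obtain ⟨a1, a2, hax2, hay2, halt⟩ := hSa
          rw [hax] at hax2
          injection hax2 with hax2
          subst hax2
          rw [hay] at hay2
          injection hay2 with hay2
          subst hay2
          exact hS2 ⟨p, q, hx, hy, (pow_lt_iff wa I p q).2 (Or.inr ⟨hieq, halt⟩)⟩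
    | le x y =>
        obtain ⟨p', q', hx', hy', hble⟩ := hS1
        obtain ⟨p, hx, hax, hbx, hmx⟩ := P.var_dataB hx'
        obtain ⟨q, hy, hay, hby, hmy⟩ := P.var_dataB hy'
        rcases (pow_le_iff wb J p' q').1 hble with hc | hc
        · exact hS2 ⟨p, q, hx, hy, (pow_le_iff wa I p q).2
            (Or.inl ((P.idx_lt_iff hx hx' hy hy').2 hc))⟩
        · have hieq : (ofLex p).1 = (ofLex q).1 := (P.idx_eq_iff hx hx' hy hy').2 hc.1
          rw [← hieq] at hay hby
          have hSa := transBA2 (ofLex p).1 _ hφG trivial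
            (by intro yy hyy; simp [FOForm.FV] at hyy
                rcases hyy with rfl | rfl
                · rw [hbx]; rfl
                · rw [hby]; rfl)
            ⟨(ofLex p').2, (ofLex q').2, hbx, hby, hc.2⟩
          obtain ⟨a1, a2, hax2, hay2, hale⟩ := hSa
          rw [hax] at hax2
          injection hax2 with hax2
          subst hax2
          rw [hay] at hay2
          injection hay2 with hay2
          subst hay2
          exact hS2 ⟨p, q, hx, hy, (pow_le_iff wa I p q).2 (Or.inr ⟨hieq, hale⟩)⟩
    | suc x y =>
        obtain ⟨p', q', hx', hy', hblt, hbbet⟩ := hS1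
        obtain ⟨p, hx, hax, hbx, hmx⟩ := P.var_dataB hx'
        obtain ⟨q, hy, hay, hby, hmy⟩ := P.var_dataB hy'
        rcases (pow_succ_iff wb J p' q').1 ⟨hblt, hbbet⟩ with ⟨hjeq, hin⟩ |
          ⟨hjsucc, hbtop, hbbot⟩
        · have hieq : (ofLex p).1 = (ofLex q).1 := (P.idx_eq_iff hx hx' hy hy').2 hjeq
          rw [← hieq] at hay hby
          have hSa := transBA2 (ofLex p).1 _ hφG trivial
            (by intro yy hyy; simp [FOForm.FV] at hyy
                rcases hyy with rfl | rfl
                · rw [hbx]; rfl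
                · rw [hby]; rfl)
            ⟨(ofLex p').2, (ofLex q').2, hbx, hby, hin.1, hin.2⟩
          obtain ⟨a1, a2, hax2, hay2, halt, habet⟩ := hSa
          rw [hax] at hax2
          injection hax2 with hax2
          subst hax2
          rw [hay] at hay2
          injection hay2 with hay2
          subst hay2
          have hcc := (pow_succ_iff wa I p q).2 (Or.inl ⟨hieq, halt, habet⟩)
          exact hS2 ⟨p, q, hx, hy, hcc.1, hcc.2⟩
        · have hisucc := P.mat.eCoe_succ' hmx hmy hjsucc
          obtain ⟨hEqG, hMaxG, hMinG⟩ := P.sucG.1 FOCtx.hole x y hφG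
          have hSamax := transBA2 (ofLex p).1 (FOForm.fmax x) hMaxG trivial
            (by intro yy hyy; simp [FOForm.FV] at hyy; subst hyy; rw [hbx]; rfl)
            ⟨(ofLex p').2, hbx, hbtop⟩
          obtain ⟨a1, hax2, hatop⟩ := hSamax
          rw [hax] at hax2
          injection hax2 with hax2
          subst hax2
          have hSamin := transBA2 (ofLex q).1 (FOForm.fmin y) hMinG trivial
            (by intro yy hyy; simp [FOForm.FV] at hyy; subst hyy; rw [hby]; rfl)
            ⟨(ofLex q').2, hby, hbbot⟩
          obtain ⟨a2, hay2, habot⟩ := hSamin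
          rw [hay] at hay2
          injection hay2 with hay2
          subst hay2
          have hcc := (pow_succ_iff wa I p q).2 (Or.inr ⟨hisucc, hatop, habot⟩)
          exact hS2 ⟨p, q, hx, hy, hcc.1, hcc.2⟩
    | fmin x =>
        obtain ⟨p', hx', hball⟩ := hS1
        obtain ⟨p, hx, hax, hbx, hmx⟩ := P.var_dataB hx'
        obtain ⟨hjb, hwbot⟩ := (pow_isBot_iff wb J p').1 hball
        have hib := P.mat.eCoe_bot' hmx hjb
        have hSa := transBA2 (ofLex p).1 _ hφG trivial
          (by intro yy hyy; simp [FOForm.FV] at hyy; subst hyy; rw [hbx]; rfl)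
          ⟨(ofLex p').2, hbx, hwbot⟩
        obtain ⟨a1, hax2, hab⟩ := hSa
        rw [hax] at hax2
        injection hax2 with hax2
        subst hax2
        exact hS2 ⟨p, hx, (pow_isBot_iff wa I p).2 ⟨hib, hab⟩⟩
    | fmax x =>
        obtain ⟨p', hx', hball⟩ := hS1
        obtain ⟨p, hx, hax, hbx, hmx⟩ := P.var_dataB hx'
        obtain ⟨hjt, hwtop⟩ := (pow_isTop_iff wb J p').1 hball
        have hit := P.mat.eCoe_top' hmx hjt
        have hSa := transBA2 (ofLex p).1 _ hφG trivial
          (by intro yy hyy; simp [FOForm.FV] at hyy; subst hyy; rw [hbx]; rfl)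
          ⟨(ofLex p').2, hbx, hwtop⟩
        obtain ⟨a1, hax2, hab⟩ := hSa
        rw [hax] at hax2
        injection hax2 with hax2
        subst hax2
        exact hS2 ⟨p, hx, (pow_isTop_iff wa I p).2 ⟨hit, hab⟩⟩
    | not ψ1 => simp [FOForm.IsAtomic] at hat
    | or φ1 φ2 => simp [FOForm.IsAtomic] at hat
    | and φ1 φ2 => simp [FOForm.IsAtomic] at hat
    | ex z φ1 => simp [FOForm.IsAtomic] at hat
    | all z φ1 => simp [FOForm.IsAtomic] at hat

  · -- negated atomic literal
    have hS2' : (wa.pow I).Sat valA ψ := by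
      by_contra hc
      exact hS2 hc
    cases ψ with
    | top => exact hS1 trivial
    | bot => exact hS2'
    | empt =>
        obtain ⟨i0⟩ := hI
        have hae : IsEmpty wa.carrier := pow_empty wa I hS2' i0
        have hSb : wb.Sat (β i0) FOForm.empt :=
          transAB2 i0 _ hφG trivial (by intro y hy; simp [FOForm.FV] at hy) hae
        exact hS1 (pow_empty' wb J hSb)
    | eq x y =>
        obtain ⟨p, q, hx, hy, hpq⟩ := hS2'
        subst hpq
        obtain ⟨p', hx', hax, hbx, hmx⟩ := P.var_data hx
        obtain ⟨q', hy', hay, hby, hmy⟩ := P.var_data hy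
        have hjeq : (ofLex p').1 = (ofLex q').1 := (P.idx_eq_iff hx hx' hy hy').1 rfl
        have hSb := transAB2 (ofLex p).1 _ hφG trivial
          (by intro yy hyy; simp [FOForm.FV] at hyy
              rcases hyy with rfl | rfl
              · rw [hbx]; rfl
              · rw [hby]; rfl)
          ⟨(ofLex p).2, (ofLex p).2, hax, hay, rfl⟩
        obtain ⟨b1, b2, hbx2, hby2, hbeq⟩ := hSb
        rw [hbx] at hbx2
        injection hbx2 with hbx2
        subst hbx2
        rw [hby] at hby2
        injection hby2 with hby2
        subst hby2
        exact hS1 ⟨p', q', hx', hy', ofLex.injective (Prod.ext hjeq hbeq)⟩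
    | lab x a =>
        obtain ⟨p, hx, hlab⟩ := hS2'
        obtain ⟨p', hx', hax, hbx, hmx⟩ := P.var_data hx
        have hSb := transAB2 (ofLex p).1 _ hφG trivial
          (by intro yy hyy; simp [FOForm.FV] at hyy; subst hyy; rw [hbx]; rfl)
          ⟨(ofLex p).2, hax, hlab⟩
        obtain ⟨b, hbx2, hblab⟩ := hSb
        rw [hbx] at hbx2
        injection hbx2 with hbx2
        subst hbx2
        exact hS1 ⟨p', hx', hblab⟩
    | lt x y =>
        obtain ⟨p, q, hx, hy, hpq⟩ := hS2'
        obtain ⟨p', hx', hax, hbx, hmx⟩ := P.var_data hx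
        obtain ⟨q', hy', hay, hby, hmy⟩ := P.var_data hy
        rcases (pow_lt_iff wa I p q).1 hpq with hc | hc
        · exact hS1 ⟨p', q', hx', hy', (pow_lt_iff wb J p' q').2
            (Or.inl ((P.idx_lt_iff hx hx' hy hy').1 hc))⟩
        · have hjeq : (ofLex p').1 = (ofLex q').1 := (P.idx_eq_iff hx hx' hy hy').1 hc.1
          rw [← hc.1] at hay hby
          have hSb := transAB2 (ofLex p).1 _ hφG trivial
            (by intro yy hyy; simp [FOForm.FV] at hyy
                rcases hyy with rfl | rfl
                · rw [hbx]; rfl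
                · rw [hby]; rfl)
            ⟨(ofLex p).2, (ofLex q).2, hax, hay, hc.2⟩
          obtain ⟨b1, b2, hbx2, hby2, hblt⟩ := hSb
          rw [hbx] at hbx2
          injection hbx2 with hbx2
          subst hbx2
          rw [hby] at hby2
          injection hby2 with hby2
          subst hby2
          exact hS1 ⟨p', q', hx', hy', (pow_lt_iff wb J p' q').2 (Or.inr ⟨hjeq, hblt⟩)⟩
    | le x y =>
        obtain ⟨p, q, hx, hy, hpq⟩ := hS2'
        obtain ⟨p', hx', hax, hbx, hmx⟩ := P.var_data hx
        obtain ⟨q', hy', hay, hby, hmy⟩ := P.var_data hy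
        rcases (pow_le_iff wa I p q).1 hpq with hc | hc
        · exact hS1 ⟨p', q', hx', hy', (pow_le_iff wb J p' q').2
            (Or.inl ((P.idx_lt_iff hx hx' hy hy').1 hc))⟩
        · have hjeq : (ofLex p').1 = (ofLex q').1 := (P.idx_eq_iff hx hx' hy hy').1 hc.1
          rw [← hc.1] at hay hby
          have hSb := transAB2 (ofLex p).1 _ hφG trivial
            (by intro yy hyy; simp [FOForm.FV] at hyy
                rcases hyy with rfl | rfl
                · rw [hbx]; rfl
                · rw [hby]; rfl)
            ⟨(ofLex p).2, (ofLex q).2, hax, hay, hc.2⟩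
          obtain ⟨b1, b2, hbx2, hby2, hble⟩ := hSb
          rw [hbx] at hbx2
          injection hbx2 with hbx2
          subst hbx2
          rw [hby] at hby2
          injection hby2 with hby2
          subst hby2
          exact hS1 ⟨p', q', hx', hy', (pow_le_iff wb J p' q').2 (Or.inr ⟨hjeq, hble⟩)⟩
    | suc x y =>
        obtain ⟨p, q, hx, hy, hpq, hbet⟩ := hS2'
        obtain ⟨p', hx', hax, hbx, hmx⟩ := P.var_data hx
        obtain ⟨q', hy', hay, hby, hmy⟩ := P.var_data hy
        rcases (pow_succ_iff wa I p q).1 ⟨hpq, hbet⟩ with ⟨hieq, hin⟩ | ⟨hisucc, htop, hbot⟩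
        · have hjeq : (ofLex p').1 = (ofLex q').1 := (P.idx_eq_iff hx hx' hy hy').1 hieq
          rw [← hieq] at hay hby
          have hSb := transAB2 (ofLex p).1 _ hφG trivial
            (by intro yy hyy; simp [FOForm.FV] at hyy
                rcases hyy with rfl | rfl
                · rw [hbx]; rfl
                · rw [hby]; rfl)
            ⟨(ofLex p).2, (ofLex q).2, hax, hay, hin.1, hin.2⟩
          obtain ⟨b1, b2, hbx2, hby2, hblt, hbbet⟩ := hSb
          rw [hbx] at hbx2
          injection hbx2 with hbx2
          subst hbx2
          rw [hby] at hby2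
          injection hby2 with hby2
          subst hby2
          have hcc := (pow_succ_iff wb J p' q').2 (Or.inl ⟨hjeq, hblt, hbbet⟩)
          exact hS1 ⟨p', q', hx', hy', hcc.1, hcc.2⟩
        · have hjsucc := P.mat.eCoe_succ hmx hmy hisucc
          obtain ⟨hEqG, hMaxG, hMinG⟩ := P.sucG.1 (FOCtx.notC FOCtx.hole) x y hφG
          have hSmax := transAB2 (ofLex p).1 (FOForm.fmax x) hMaxG trivial
            (by intro yy hyy; simp [FOForm.FV] at hyy; subst hyy; rw [hbx]; rfl)
            ⟨(ofLex p).2, hax, htop⟩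
          obtain ⟨b1, hbx2, hbtop⟩ := hSmax
          rw [hbx] at hbx2
          injection hbx2 with hbx2
          subst hbx2
          have hSmin := transAB2 (ofLex q).1 (FOForm.fmin y) hMinG trivial
            (by intro yy hyy; simp [FOForm.FV] at hyy; subst hyy; rw [hby]; rfl)
            ⟨(ofLex q).2, hay, hbot⟩
          obtain ⟨b2, hby2, hbbot⟩ := hSmin
          rw [hby] at hby2
          injection hby2 with hby2
          subst hby2
          have hcc := (pow_succ_iff wb J p' q').2 (Or.inr ⟨hjsucc, hbtop, hbbot⟩)
          exact hS1 ⟨p', q', hx', hy', hcc.1, hcc.2⟩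
    | fmin x =>
        obtain ⟨p, hx, hball⟩ := hS2'
        obtain ⟨p', hx', hax, hbx, hmx⟩ := P.var_data hx
        obtain ⟨hib, hwbot⟩ := (pow_isBot_iff wa I p).1 hball
        have hjb := P.mat.eCoe_bot hmx hib
        have hSb := transAB2 (ofLex p).1 _ hφG trivial
          (by intro yy hyy; simp [FOForm.FV] at hyy; subst hyy; rw [hbx]; rfl)
          ⟨(ofLex p).2, hax, hwbot⟩
        obtain ⟨b, hbx2, hbb⟩ := hSb
        rw [hbx] at hbx2
        injection hbx2 with hbx2
        subst hbx2
        exact hS1 ⟨p', hx', (pow_isBot_iff wb J p').2 ⟨hjb, hbb⟩⟩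
    | fmax x =>
        obtain ⟨p, hx, hball⟩ := hS2'
        obtain ⟨p', hx', hax, hbx, hmx⟩ := P.var_data hx
        obtain ⟨hit, hwtop⟩ := (pow_isTop_iff wa I p).1 hball
        have hjt := P.mat.eCoe_top hmx hit
        have hSb := transAB2 (ofLex p).1 _ hφG trivial
          (by intro yy hyy; simp [FOForm.FV] at hyy; subst hyy; rw [hbx]; rfl)
          ⟨(ofLex p).2, hax, hwtop⟩
        obtain ⟨b, hbx2, hbb⟩ := hSb
        rw [hbx] at hbx2
        injection hbx2 with hbx2
        subst hbx2
        exact hS1 ⟨p', hx', (pow_isTop_iff wb J p').2 ⟨hjt, hbb⟩⟩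
    | not ψ => simp [FOForm.IsAtomic] at hat
    | or φ1 φ2 => simp [FOForm.IsAtomic] at hat
    | and φ1 φ2 => simp [FOForm.IsAtomic] at hat
    | ex z φ1 => simp [FOForm.IsAtomic] at hat
    | all z φ1 => simp [FOForm.IsAtomic] at hat

end NoWin
section Step

variable {I J : Type} [LinearOrder I] [LinearOrder J] [Countable I] [Countable J]
variable {GI : GapStruct I} {GJ : GapStruct J} {wa wb : GWord}
variable {G G' : Set FOForm} {r : ℕ}
variable {valA : ℕ → Option (wa.pow I).carrier} {valB : ℕ → Option (wb.pow J).carrier}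
variable {α : I → ℕ → Option wa.carrier} {β : I → ℕ → Option wb.carrier}

lemma pIdx_updVal {u : GWord} {T : Type} [LinearOrder T] [Countable T]
    (val : ℕ → Option (u.pow T).carrier) (x : ℕ) (q : (u.pow T).carrier) :
    updO (eraseO (pIdx val) x) x (ofLex q).1 = pIdx (updVal val x q) := by
  funext y
  unfold updO eraseO pIdx updVal
  by_cases hy : y = x <;> simp [hy]

lemma pIdx_finite {u : GWord} {T : Type} [LinearOrder T] [Countable T]
    {val : ℕ → Option (u.pow T).carrier} (h : ∃ V : Finset ℕ, ∀ y, (val y).isSome ↔ y ∈ V) :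
    ∃ V : Finset ℕ, ∀ y, ((pIdx val) y).isSome ↔ y ∈ V := by
  obtain ⟨V, hV⟩ := h
  refine ⟨V, fun y => ?_⟩
  rw [← hV y]
  unfold pIdx
  cases val y <;> simp

/-- Duplicator's reply to a quest in the first power word. -/
lemma PowInv.step_A
    {R R' : Set FOForm → (ℕ → Option wa.carrier) → (ℕ → Option wb.carrier) → Prop}
    (P : PowInv GI GJ wa wb R G r valA valB α β)
    (hsuc' : SucStable G') (hqd' : ∀ φ ∈ G', φ.qd + 1 ≤ r) (hne : G'.Nonempty)
    (x : ℕ) (q : (wa.pow I).carrier)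
    (α' : I → ℕ → Option wa.carrier) (β' : I → ℕ → Option wb.carrier)
    (hα' : ∀ k, α' k = updVal (α k) x (ofLex q).2)
    (hβ' : ∀ k, ∃ rk, β' k = updVal (β k) x rk)
    (hR' : ∀ k, R' G' (α' k) (β' k)) :
    ∃ (j : J) (qb : wb.carrier), β' (ofLex q).1 x = some qb ∧
      PowInv GI GJ wa wb R' G' (r - 1) (updVal valA x q)
        (updVal valB x (toLex (j, qb))) α' β' := by
  obtain ⟨φ0, hφ0⟩ := hne
  have hr1 : 1 ≤ r := le_trans (by omega) (hqd' φ0 hφ0)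
  have hfinM : (mpairs (pIdx valA) (pIdx valB)).Finite := mpairs_finite (pIdx_finite P.fin)
  obtain ⟨j, hMnew⟩ := MatchInv.insertI hr1 (P.mat.erase x)
    (hfinM.subset mpairs_erase_subset) x (by simp [eraseO]) (by simp [eraseO]) (ofLex q).1
  obtain ⟨qb, hqb⟩ := hβ' (ofLex q).1
  have hqbx : β' (ofLex q).1 x = some qb := by rw [hqb]; simp [updVal]
  refine ⟨j, qb, hqbx, ?_, ?_, ?_, ?_, ?_, ?_, ?_, ?_, ?_⟩
  · exact hsuc'
  · intro φ hφ
    have := hqd' φ hφ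
    omega
  · obtain ⟨V, hV⟩ := P.fin
    refine ⟨insert x V, fun y => ?_⟩
    unfold updVal
    by_cases hy : y = x <;> simp [hy, hV y]
  · intro y
    unfold updVal
    by_cases hy : y = x <;> simp [hy, P.domAB y] <;> rfl
  · intro k y
    rw [hα' k]
    unfold updVal
    by_cases hy : y = x <;> simp [hy, P.domSubA k y]
  · intro k y
    obtain ⟨rk, hrk⟩ := hβ' k
    rw [hrk]
    unfold updVal
    by_cases hy : y = x <;> simp [hy, P.domSubB k y]
  · exact hR'
  · intro y p hp
    by_cases hy : y = x
    · subst hy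
      have hq : p = q := by
        unfold updVal at hp
        simp at hp
        exact hp.symm
      subst hq
      constructor
      · rw [hα']
        unfold updVal
        simp
      · refine ⟨toLex (j, qb), ?_, ?_⟩
        · unfold updVal
          simp
        · exact hqbx
    · have hp' : valA y = some p := by
        unfold updVal at hp
        rw [if_neg hy] at hp
        exact hp
      obtain ⟨ha, q0, hq0, hb⟩ := P.native y p hp'
      refine ⟨?_, q0, ?_, ?_⟩
      · rw [hα']
        unfold updVal
        rw [if_neg hy]
        exact ha
      · unfold updVal
        rw [if_neg hy]
        exact hq0
      · obtain ⟨rk, hrk⟩ := hβ' (ofLex p).1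
        rw [hrk]
        unfold updVal
        rw [if_neg hy]
        exact hb
  · rw [← pIdx_updVal valA x q, ← pIdx_updVal valB x (toLex (j, qb))]
    exact hMnew

/-- Duplicator's reply to a quest in the second power word. -/
lemma PowInv.step_B
    {R R' : Set FOForm → (ℕ → Option wa.carrier) → (ℕ → Option wb.carrier) → Prop}
    (P : PowInv GI GJ wa wb R G r valA valB α β)
    (hsuc' : SucStable G') (hqd' : ∀ φ ∈ G', φ.qd + 1 ≤ r) (hne : G'.Nonempty)
    (x : ℕ) (q : (wb.pow J).carrier)
    (α' : I → ℕ → Option wa.carrier) (β' : I → ℕ → Option wb.carrier)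
    (hβ' : ∀ k, β' k = updVal (β k) x (ofLex q).2)
    (hα' : ∀ k, ∃ rk, α' k = updVal (α k) x rk)
    (hR' : ∀ k, R' G' (α' k) (β' k)) :
    ∃ (i : I) (qa : wa.carrier), α' i x = some qa ∧
      PowInv GI GJ wa wb R' G' (r - 1) (updVal valA x (toLex (i, qa)))
        (updVal valB x q) α' β' := by
  obtain ⟨φ0, hφ0⟩ := hne
  have hr1 : 1 ≤ r := le_trans (by omega) (hqd' φ0 hφ0)
  have hfinM : (mpairs (pIdx valA) (pIdx valB)).Finite := mpairs_finite (pIdx_finite P.fin)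
  obtain ⟨i, hMnew⟩ := MatchInv.insertJ hr1 (P.mat.erase x)
    (hfinM.subset mpairs_erase_subset) x (by simp [eraseO]) (by simp [eraseO]) (ofLex q).1
  obtain ⟨qa, hqa⟩ := hα' i
  have hqax : α' i x = some qa := by rw [hqa]; simp [updVal]
  refine ⟨i, qa, hqax, ?_, ?_, ?_, ?_, ?_, ?_, ?_, ?_, ?_⟩
  · exact hsuc'
  · intro φ hφ
    have := hqd' φ hφ
    omega
  · obtain ⟨V, hV⟩ := P.fin
    refine ⟨insert x V, fun y => ?_⟩
    unfold updVal
    by_cases hy : y = x <;> simp [hy, hV y] <;> rfl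
  · intro y
    unfold updVal
    by_cases hy : y = x <;> simp [hy, P.domAB y] <;> rfl
  · intro k y
    obtain ⟨rk, hrk⟩ := hα' k
    rw [hrk]
    unfold updVal
    by_cases hy : y = x <;> simp [hy, P.domSubA k y] <;> rfl
  · intro k y
    rw [hβ' k]
    unfold updVal
    by_cases hy : y = x <;> simp [hy, P.domSubB k y] <;> rfl
  · exact hR'
  · intro y p hp
    by_cases hy : y = x
    · subst hy
      have hq : p = toLex (i, qa) := by
        unfold updVal at hp
        simp at hp
        exact Option.some.inj hp.symm
      subst hq
      constructor
      · exact hqax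
      · refine ⟨q, ?_, ?_⟩
        · unfold updVal
          simp
        · rw [hβ']
          unfold updVal
          simp
    · have hp' : valA y = some p := by
        unfold updVal at hp
        rw [if_neg hy] at hp
        exact hp
      obtain ⟨ha, q0, hq0, hb⟩ := P.native y p hp'
      refine ⟨?_, q0, ?_, ?_⟩
      · obtain ⟨rk, hrk⟩ := hα' (ofLex p).1
        rw [hrk]
        unfold updVal
        rw [if_neg hy]
        exact ha
      · unfold updVal
        rw [if_neg hy]
        exact hq0
      · rw [hβ']
        unfold updVal
        rw [if_neg hy]
        exact hb
  · rw [← pIdx_updVal valA x (toLex (i, qa)), ← pIdx_updVal valB x q]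
    exact hMnew

end Step
section MainLemma

/-- The sub-configuration relation for the unswapped orientation. -/
def RfRel (Good₀ : Set Config) (u v : GWord) :
    Set FOForm → (ℕ → Option u.carrier) → (ℕ → Option v.carrier) → Prop :=
  fun G a b => (⟨G, u, v, a, b⟩ : Config) ∈ Good₀

/-- The sub-configuration relation for the swapped orientation. -/
def RtRel (Good₀ : Set Config) (u v : GWord) :
    Set FOForm → (ℕ → Option u.carrier) → (ℕ → Option v.carrier) → Prop :=
  fun G a b => (⟨G, v, u, b, a⟩ : Config) ∈ Good₀

variable {I J : Type} [LinearOrder I] [LinearOrder J] [Countable I] [Countable J]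

lemma core_win (F : Set FOForm) (hsuc : SucStable F) (n : ℕ) (hqd : QDBoundedBy F n)
    (u v : GWord) (Good₀ : Set Config) (hsafe₀ : SafeInv Good₀)
    (hmem₀ : (⟨F, u, v, fun _ => none, fun _ => none⟩ : Config) ∈ Good₀)
    (GI : GapStruct I) (GJ : GapStruct J)
    (bigI : ((2 ^ (n+1) : ℕ) : Dist) ≤ GI.D ⊥ ⊤)
    (bigJ : ((2 ^ (n+1) : ℕ) : Dist) ≤ GJ.D ⊥ ⊤) :
    DuplicatorWinsGame F (u.pow I) (v.pow J) := by
  classical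
  have hone : ((1 : ℕ) : Dist) < ((2 ^ (n+1) : ℕ) : Dist) := by
    exact_mod_cast Nat.one_lt_two_pow (by omega)
  have hNI : Nonempty I := by
    obtain ⟨c, -⟩ := GI.ex_bot 1 ebot_lt_etop one_pos (lt_of_lt_of_le hone bigI)
    exact ⟨c⟩
  have hNJ : Nonempty J := by
    obtain ⟨c, -⟩ := GJ.ex_bot 1 ebot_lt_etop one_pos (lt_of_lt_of_le hone bigJ)
    exact ⟨c⟩
  refine ⟨{C | (∃ G r vA vB a b, PowInv GI GJ u v (RfRel Good₀ u v) G r vA vB a b ∧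
      C = ⟨G, u.pow I, v.pow J, vA, vB⟩) ∨
    (∃ G r vA vB a b, PowInv GI GJ u v (RtRel Good₀ u v) G r vA vB a b ∧
      C = ⟨G, v.pow J, u.pow I, vB, vA⟩)}, ?_, ?_⟩
  · -- the initial configuration satisfies the invariant
    refine Or.inl ⟨F, n, fun _ => none, fun _ => none, fun _ _ => none, fun _ _ => none,
      ⟨hsuc, hqd, ⟨∅, by simp⟩, by simp, by simp, by simp, fun i => hmem₀,
        by intro x p hp; simp at hp, ?_, ?_⟩, rfl⟩
    · -- order alignment for the sentinel pairs
      intro z hz z' hz'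
      rcases hz with hz | hz | ⟨y, i, j, h1, h2, h3⟩
      · rcases hz' with hz' | hz' | ⟨y, i, j, h1, h2, h3⟩
        · subst hz; subst hz'
          simp
        · subst hz; subst hz'
          exact iff_of_true ebot_lt_etop ebot_lt_etop
        · simp [pIdx] at h1
      · rcases hz' with hz' | hz' | ⟨y, i, j, h1, h2, h3⟩
        · subst hz; subst hz'
          exact iff_of_false not_lt_bot not_lt_bot
        · subst hz; subst hz'
          simp
        · simp [pIdx] at h1
      · simp [pIdx] at h1
    · -- gap condition for the sentinel pair
      intro z hz z' hz' hlt hcons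
      rcases hz with hz | hz | ⟨y, i, j, h1, h2, h3⟩
      · rcases hz' with hz' | hz' | ⟨y, i, j, h1, h2, h3⟩
        · subst hz; subst hz'
          exact absurd hlt (lt_irrefl _)
        · subst hz; subst hz'
          exact Or.inr ⟨bigI, bigJ⟩
        · simp [pIdx] at h1
      · rcases hz' with hz' | hz' | ⟨y, i, j, h1, h2, h3⟩
        · subst hz; subst hz'
          exact absurd (hlt.trans ebot_lt_etop) (lt_irrefl _)
        · subst hz; subst hz'
          exact absurd hlt (lt_irrefl _)
        · simp [pIdx] at h1
      · simp [pIdx] at h1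
  · -- the invariant is safe
    rintro C (⟨G, r, vA, vB, a, b, hP, rfl⟩ | ⟨G, r, vA, vB, a, b, hP, rfl⟩)
    · -- unswapped shape
      have hqd' : ∀ (Q : Quant) (x : ℕ), ∀ φ ∈ reduct Q x G, φ.qd + 1 ≤ r :=
        fun Q x φ hφ => by rw [← qd_apply Q x φ]; exact hP.qdG _ hφ
      refine ⟨hP.nowin_A (fun i => (hsafe₀ _ (hP.subR i)).1) hNI hNJ, ?_, ?_, ?_, ?_⟩
      · -- ∃-move: quest in `u.pow I`
        intro x hne q
        have hsubstep : ∀ k : I, ∃ rr : v.carrier,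
            (⟨reduct Quant.qex x G, u, v, updVal (a k) x (ofLex q).2,
              updVal (b k) x rr⟩ : Config) ∈ Good₀ :=
          fun k => (hsafe₀ _ (hP.subR k)).2.1 x hne (ofLex q).2
        choose rr hrr using hsubstep
        obtain ⟨j, qb, hqbx, hP'⟩ := hP.step_A (R' := RfRel Good₀ u v)
          (hP.sucG.reduct Quant.qex x) (hqd' Quant.qex x) hne x q
          (fun k => updVal (a k) x (ofLex q).2) (fun k => updVal (b k) x (rr k))
          (fun k => rfl) (fun k => ⟨rr k, rfl⟩) hrr
        exact ⟨toLex (j, qb), Or.inl ⟨_, r - 1, _, _, _, _, hP', rfl⟩⟩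
      · -- ∀-move: quest in `v.pow J`
        intro x hne q
        have hsubstep : ∀ k : I, ∃ rr : u.carrier,
            (⟨reduct Quant.qall x G, u, v, updVal (a k) x rr,
              updVal (b k) x (ofLex q).2⟩ : Config) ∈ Good₀ :=
          fun k => (hsafe₀ _ (hP.subR k)).2.2.1 x hne (ofLex q).2
        choose rr hrr using hsubstep
        obtain ⟨i, qa, hqax, hP'⟩ := hP.step_B (R' := RfRel Good₀ u v)
          (hP.sucG.reduct Quant.qall x) (hqd' Quant.qall x) hne x q
          (fun k => updVal (a k) x (rr k)) (fun k => updVal (b k) x (ofLex q).2)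
          (fun k => rfl) (fun k => ⟨rr k, rfl⟩) hrr
        exact ⟨toLex (i, qa), Or.inl ⟨_, r - 1, _, _, _, _, hP', rfl⟩⟩
      · -- ¬∃-move: quest in `v.pow J`, words get swapped
        intro x hne q
        have hsubstep : ∀ k : I, ∃ rr : u.carrier,
            (⟨reduct Quant.qnex x G, v, u, updVal (b k) x (ofLex q).2,
              updVal (a k) x rr⟩ : Config) ∈ Good₀ :=
          fun k => (hsafe₀ _ (hP.subR k)).2.2.2.1 x hne (ofLex q).2
        choose rr hrr using hsubstep
        obtain ⟨i, qa, hqax, hP'⟩ := hP.step_B (R' := RtRel Good₀ u v)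
          (hP.sucG.reduct Quant.qnex x) (hqd' Quant.qnex x) hne x q
          (fun k => updVal (a k) x (rr k)) (fun k => updVal (b k) x (ofLex q).2)
          (fun k => rfl) (fun k => ⟨rr k, rfl⟩) hrr
        exact ⟨toLex (i, qa), Or.inr ⟨_, r - 1, _, _, _, _, hP', rfl⟩⟩
      · -- ¬∀-move: quest in `u.pow I`, words get swapped
        intro x hne q
        have hsubstep : ∀ k : I, ∃ rr : v.carrier,
            (⟨reduct Quant.qnall x G, v, u, updVal (b k) x rr,
              updVal (a k) x (ofLex q).2⟩ : Config) ∈ Good₀ :=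
          fun k => (hsafe₀ _ (hP.subR k)).2.2.2.2 x hne (ofLex q).2
        choose rr hrr using hsubstep
        obtain ⟨j, qb, hqbx, hP'⟩ := hP.step_A (R' := RtRel Good₀ u v)
          (hP.sucG.reduct Quant.qnall x) (hqd' Quant.qnall x) hne x q
          (fun k => updVal (a k) x (ofLex q).2) (fun k => updVal (b k) x (rr k))
          (fun k => rfl) (fun k => ⟨rr k, rfl⟩) hrr
        exact ⟨toLex (j, qb), Or.inr ⟨_, r - 1, _, _, _, _, hP', rfl⟩⟩
    · -- swapped shape
      have hqd' : ∀ (Q : Quant) (x : ℕ), ∀ φ ∈ reduct Q x G, φ.qd + 1 ≤ r :=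
        fun Q x φ hφ => by rw [← qd_apply Q x φ]; exact hP.qdG _ hφ
      refine ⟨hP.nowin_B (fun i => (hsafe₀ _ (hP.subR i)).1) hNI hNJ, ?_, ?_, ?_, ?_⟩
      · -- ∃-move: quest in `v.pow J`
        intro x hne q
        have hsubstep : ∀ k : I, ∃ rr : u.carrier,
            (⟨reduct Quant.qex x G, v, u, updVal (b k) x (ofLex q).2,
              updVal (a k) x rr⟩ : Config) ∈ Good₀ :=
          fun k => (hsafe₀ _ (hP.subR k)).2.1 x hne (ofLex q).2
        choose rr hrr using hsubstep
        obtain ⟨i, qa, hqax, hP'⟩ := hP.step_B (R' := RtRel Good₀ u v)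
          (hP.sucG.reduct Quant.qex x) (hqd' Quant.qex x) hne x q
          (fun k => updVal (a k) x (rr k)) (fun k => updVal (b k) x (ofLex q).2)
          (fun k => rfl) (fun k => ⟨rr k, rfl⟩) hrr
        exact ⟨toLex (i, qa), Or.inr ⟨_, r - 1, _, _, _, _, hP', rfl⟩⟩
      · -- ∀-move: quest in `u.pow I`
        intro x hne q
        have hsubstep : ∀ k : I, ∃ rr : v.carrier,
            (⟨reduct Quant.qall x G, v, u, updVal (b k) x rr,
              updVal (a k) x (ofLex q).2⟩ : Config) ∈ Good₀ :=
          fun k => (hsafe₀ _ (hP.subR k)).2.2.1 x hne (ofLex q).2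
        choose rr hrr using hsubstep
        obtain ⟨j, qb, hqbx, hP'⟩ := hP.step_A (R' := RtRel Good₀ u v)
          (hP.sucG.reduct Quant.qall x) (hqd' Quant.qall x) hne x q
          (fun k => updVal (a k) x (ofLex q).2) (fun k => updVal (b k) x (rr k))
          (fun k => rfl) (fun k => ⟨rr k, rfl⟩) hrr
        exact ⟨toLex (j, qb), Or.inr ⟨_, r - 1, _, _, _, _, hP', rfl⟩⟩
      · -- ¬∃-move: quest in `u.pow I`, back to the unswapped shape
        intro x hne q
        have hsubstep : ∀ k : I, ∃ rr : v.carrier,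
            (⟨reduct Quant.qnex x G, u, v, updVal (a k) x (ofLex q).2,
              updVal (b k) x rr⟩ : Config) ∈ Good₀ :=
          fun k => (hsafe₀ _ (hP.subR k)).2.2.2.1 x hne (ofLex q).2
        choose rr hrr using hsubstep
        obtain ⟨j, qb, hqbx, hP'⟩ := hP.step_A (R' := RfRel Good₀ u v)
          (hP.sucG.reduct Quant.qnex x) (hqd' Quant.qnex x) hne x q
          (fun k => updVal (a k) x (ofLex q).2) (fun k => updVal (b k) x (rr k))
          (fun k => rfl) (fun k => ⟨rr k, rfl⟩) hrr
        exact ⟨toLex (j, qb), Or.inl ⟨_, r - 1, _, _, _, _, hP', rfl⟩⟩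
      · -- ¬∀-move: quest in `v.pow J`, back to the unswapped shape
        intro x hne q
        have hsubstep : ∀ k : I, ∃ rr : u.carrier,
            (⟨reduct Quant.qnall x G, u, v, updVal (a k) x rr,
              updVal (b k) x (ofLex q).2⟩ : Config) ∈ Good₀ :=
          fun k => (hsafe₀ _ (hP.subR k)).2.2.2.2 x hne (ofLex q).2
        choose rr hrr using hsubstep
        obtain ⟨i, qa, hqax, hP'⟩ := hP.step_B (R' := RfRel Good₀ u v)
          (hP.sucG.reduct Quant.qnall x) (hqd' Quant.qnall x) hne x q
          (fun k => updVal (a k) x (rr k)) (fun k => updVal (b k) x (ofLex q).2)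
          (fun k => rfl) (fun k => ⟨rr k, rfl⟩) hrr
        exact ⟨toLex (i, qa), Or.inl ⟨_, r - 1, _, _, _, _, hP', rfl⟩⟩

end MainLemma
/-! ### The gap structure on `Fin m` -/

lemma eind_cases {γ : Type} (e : EInd γ) : e = ⊥ ∨ e = ⊤ ∨ ∃ c : γ, e = eCoe c := by
  induction e using WithBot.recBotCoe with
  | bot => exact Or.inl rfl
  | coe e1 =>
    induction e1 using WithTop.recTopCoe with
    | top => exact Or.inr (Or.inl rfl)
    | coe c => exact Or.inr (Or.inr ⟨c, rfl⟩)

section FinGap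

variable {m : ℕ}

/-- Offset coordinate on `Fin m` with sentinels. -/
def finOff (m : ℕ) : EInd (Fin m) → ℤ :=
  WithBot.recBotCoe (-1) (WithTop.recTopCoe (m : ℤ) (fun i => (i : ℤ)))

lemma finOff_bot : finOff m ⊥ = -1 := rfl
lemma finOff_top : finOff m ⊤ = m := rfl
lemma finOff_coe (i : Fin m) : finOff m (eCoe i) = i := rfl

lemma eind_fin_cases (e : EInd (Fin m)) : e = ⊥ ∨ e = ⊤ ∨ ∃ i : Fin m, e = eCoe i := by
  induction e using WithBot.recBotCoe with
  | bot => exact Or.inl rfl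
  | coe e1 =>
    induction e1 using WithTop.recTopCoe with
    | top => exact Or.inr (Or.inl rfl)
    | coe i => exact Or.inr (Or.inr ⟨i, rfl⟩)

lemma finOff_ge (e : EInd (Fin m)) : -1 ≤ finOff m e := by
  rcases eind_fin_cases e with rfl | rfl | ⟨i, rfl⟩
  · rfl
  · rw [finOff_top]; omega
  · rw [finOff_coe]; omega

lemma finOff_le (e : EInd (Fin m)) : finOff m e ≤ m := by
  rcases eind_fin_cases e with rfl | rfl | ⟨i, rfl⟩
  · rw [finOff_bot]; omega
  · rw [finOff_top]
  · rw [finOff_coe]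
    have := i.isLt
    omega

lemma fin_char (e e' : EInd (Fin m)) : e < e' ↔
    ((fun _ : EInd (Fin m) => (0:ℕ)) e < (fun _ : EInd (Fin m) => (0:ℕ)) e' ∨
      ((fun _ : EInd (Fin m) => (0:ℕ)) e = (fun _ : EInd (Fin m) => (0:ℕ)) e' ∧
        finOff m e < finOff m e')) := by
  simp only [lt_irrefl, false_or, true_and]
  rcases eind_fin_cases e with rfl | rfl | ⟨i, rfl⟩ <;>
    rcases eind_fin_cases e' with rfl | rfl | ⟨i', rfl⟩
  · simp [finOff_bot]
  · simp only [finOff_bot, finOff_top]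
    exact iff_of_true ebot_lt_etop (by omega)
  · simp only [finOff_bot, finOff_coe]
    exact iff_of_true (bot_lt_eCoe i') (by omega)
  · simp only [finOff_bot, finOff_top]
    exact iff_of_false (fun h => not_lt_bot h) (by omega)
  · simp [finOff_top]
  · simp only [finOff_top, finOff_coe]
    refine iff_of_false not_top_lt ?_
    have := i'.isLt
    omega
  · simp only [finOff_bot, finOff_coe]
    refine iff_of_false not_lt_bot ?_
    omega
  · simp only [finOff_top, finOff_coe]
    exact iff_of_true (eCoe_lt_top i) (by have := i.isLt; omega)
  · simp only [finOff_coe]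
    rw [eCoe_lt_eCoe]
    exact ⟨fun h => by exact_mod_cast h, fun h => by exact_mod_cast h⟩

lemma fin_real (e e' : EInd (Fin m)) (hlt : e < e') (o : ℤ) (ho1 : finOff m e < o)
    (ho2 : o < finOff m e') : ∃ c : Fin m, finOff m (eCoe c) = o := by
  have h1 := finOff_ge e
  have h2 := finOff_le e'
  have hom : 0 ≤ o ∧ o < m := by omega
  refine ⟨⟨o.toNat, by omega⟩, ?_⟩
  rw [finOff_coe]
  simp
  omega

/-- The gap structure on `Fin m`. -/
noncomputable def finGap (m : ℕ) : GapStruct (Fin m) :=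
  mkGap (fun _ => (0:ℕ)) (finOff m) fin_char
    (fun e e' hlt o ho1 ho2 => by
      obtain ⟨c, hc⟩ := fin_real e e' hlt o ho1 (ho2 rfl)
      exact ⟨c, rfl, hc⟩)
    (fun e e' hlt o ho1 ho2 => by
      obtain ⟨c, hc⟩ := fin_real e e' hlt o (ho2 rfl) ho1
      exact ⟨c, rfl, hc⟩)

lemma finGap_bot_top : (finGap m).D ⊥ ⊤ = ((m + 1 : ℕ) : Dist) := by
  show fibDist (fun _ : EInd (Fin m) => (0:ℕ)) (finOff m) ⊥ ⊤ = ((m + 1 : ℕ) : Dist)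
  unfold fibDist
  rw [if_pos rfl, finOff_bot, finOff_top]
  congr 1

end FinGap

/-! ### The gap structure on `ρ` -/

section RhoGap

/-- The three kinds of elements of `ρ`. -/
def rA (k : ℕ) : Rho := toLex (Sum.inl (toLex (Sum.inl k)))

def rB (q : ℚ) (z : ℤ) : Rho := toLex (Sum.inl (toLex (Sum.inr (toLex (q, z)))))

def rC (k : ℕ) : Rho := toLex (Sum.inr (OrderDual.toDual k))

lemma rho_cases (t : Rho) :
    (∃ k, t = rA k) ∨ (∃ q z, t = rB q z) ∨ (∃ k, t = rC k) := by
  have ht : t = toLex (ofLex t) := rfl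
  cases hs : ofLex t with
  | inl s =>
    have hs2 : s = toLex (ofLex s) := rfl
    cases hs3 : ofLex s with
    | inl k =>
      refine Or.inl ⟨k, ?_⟩
      rw [ht, hs, hs2, hs3]
      rfl
    | inr p =>
      refine Or.inr (Or.inl ⟨(ofLex p).1, (ofLex p).2, ?_⟩)
      rw [ht, hs, hs2, hs3]
      rfl
  | inr k =>
    refine Or.inr (Or.inr ⟨OrderDual.ofDual k, ?_⟩)
    rw [ht, hs]
    rfl

lemma rA_lt_rA {k k' : ℕ} : rA k < rA k' ↔ k < k' := by
  unfold rA
  rw [Sum.Lex.inl_lt_inl_iff, Sum.Lex.inl_lt_inl_iff]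

lemma rB_lt_rB {q q' : ℚ} {z z' : ℤ} : rB q z < rB q' z' ↔ (q < q' ∨ (q = q' ∧ z < z')) := by
  unfold rB
  rw [Sum.Lex.inl_lt_inl_iff, Sum.Lex.inr_lt_inr_iff, Prod.Lex.lt_iff]
  exact Iff.rfl

lemma rC_lt_rC {k k' : ℕ} : rC k < rC k' ↔ k' < k := by
  unfold rC
  rw [Sum.Lex.inr_lt_inr_iff]
  exact OrderDual.toDual_lt_toDual

lemma rA_lt_rB {k : ℕ} {q : ℚ} {z : ℤ} : rA k < rB q z := by
  unfold rA rB
  rw [Sum.Lex.inl_lt_inl_iff]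
  exact Sum.Lex.inl_lt_inr _ _

lemma rA_lt_rC {k k' : ℕ} : rA k < rC k' := Sum.Lex.inl_lt_inr _ _

lemma rB_lt_rC {q : ℚ} {z : ℤ} {k : ℕ} : rB q z < rC k := Sum.Lex.inl_lt_inr _ _

/-- Fiber coordinate on `ρ` with sentinels. -/
noncomputable def rhoFib : EInd Rho → EInd ℚ :=
  WithBot.recBotCoe ⊥ (WithTop.recTopCoe ⊤ (fun t =>
    match ofLex t with
    | Sum.inl s =>
      match ofLex s with
      | Sum.inl _ => ⊥
      | Sum.inr p => eCoe (ofLex p).1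
    | Sum.inr _ => ⊤))

/-- Offset coordinate on `ρ` with sentinels. -/
noncomputable def rhoOff : EInd Rho → ℤ :=
  WithBot.recBotCoe (-1) (WithTop.recTopCoe 1 (fun t =>
    match ofLex t with
    | Sum.inl s =>
      match ofLex s with
      | Sum.inl k => (k : ℤ)
      | Sum.inr p => (ofLex p).2
    | Sum.inr k => -((OrderDual.ofDual k : ℕ) : ℤ)))

lemma rhoFib_bot : rhoFib ⊥ = ⊥ := rfl
lemma rhoFib_top : rhoFib ⊤ = ⊤ := rfl
lemma rhoFib_rA (k : ℕ) : rhoFib (eCoe (rA k)) = ⊥ := rfl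
lemma rhoFib_rB (q : ℚ) (z : ℤ) : rhoFib (eCoe (rB q z)) = eCoe q := rfl
lemma rhoFib_rC (k : ℕ) : rhoFib (eCoe (rC k)) = ⊤ := rfl
lemma rhoOff_bot : rhoOff ⊥ = -1 := rfl
lemma rhoOff_top : rhoOff ⊤ = 1 := rfl
lemma rhoOff_rA (k : ℕ) : rhoOff (eCoe (rA k)) = k := rfl
lemma rhoOff_rB (q : ℚ) (z : ℤ) : rhoOff (eCoe (rB q z)) = z := rfl
lemma rhoOff_rC (k : ℕ) : rhoOff (eCoe (rC k)) = -(k : ℤ) := rfl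

lemma eind_rho_cases (e : EInd Rho) : e = ⊥ ∨ e = ⊤ ∨ (∃ k, e = eCoe (rA k)) ∨
    (∃ q z, e = eCoe (rB q z)) ∨ (∃ k, e = eCoe (rC k)) := by
  induction e using WithBot.recBotCoe with
  | bot => exact Or.inl rfl
  | coe e1 =>
    induction e1 using WithTop.recTopCoe with
    | top => exact Or.inr (Or.inl rfl)
    | coe t =>
      rcases rho_cases t with ⟨k, rfl⟩ | ⟨q, z, rfl⟩ | ⟨k, rfl⟩
      · exact Or.inr (Or.inr (Or.inl ⟨k, rfl⟩))
      · exact Or.inr (Or.inr (Or.inr (Or.inl ⟨q, z, rfl⟩)))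
      · exact Or.inr (Or.inr (Or.inr (Or.inr ⟨k, rfl⟩)))

lemma eCoe_eq_eCoe {γ : Type} {a b : γ} : eCoe a = eCoe b ↔ a = b :=
  ⟨fun h => by unfold eCoe at h; exact_mod_cast h, fun h => by rw [h]⟩

lemma rho_char (e e' : EInd Rho) : e < e' ↔
    (rhoFib e < rhoFib e' ∨ (rhoFib e = rhoFib e' ∧ rhoOff e < rhoOff e')) := by
  rcases eind_rho_cases e with rfl | rfl | ⟨k, rfl⟩ | ⟨q, z, rfl⟩ | ⟨k, rfl⟩ <;>
    rcases eind_rho_cases e' with rfl | rfl | ⟨k', rfl⟩ | ⟨q', z', rfl⟩ | ⟨k', rfl⟩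
  · simp [rhoFib_bot, rhoOff_bot]
  · exact iff_of_true ebot_lt_etop (Or.inl (by rw [rhoFib_bot, rhoFib_top]; exact ebot_lt_etop))
  · exact iff_of_true (bot_lt_eCoe _)
      (Or.inr ⟨by rw [rhoFib_bot, rhoFib_rA], by rw [rhoOff_bot, rhoOff_rA]; omega⟩)
  · exact iff_of_true (bot_lt_eCoe _)
      (Or.inl (by rw [rhoFib_bot, rhoFib_rB]; exact bot_lt_eCoe _))
  · exact iff_of_true (bot_lt_eCoe _)
      (Or.inl (by rw [rhoFib_bot, rhoFib_rC]; exact ebot_lt_etop))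
  · refine iff_of_false not_lt_bot ?_
    rw [rhoFib_top, rhoFib_bot, rhoOff_top, rhoOff_bot]
    rintro (h | ⟨h, h2⟩)
    · exact not_lt_bot h
    · exact ebot_lt_etop.ne' h
  · simp [rhoFib_top, rhoOff_top]
  · refine iff_of_false not_top_lt ?_
    rw [rhoFib_top, rhoFib_rA, rhoOff_top, rhoOff_rA]
    rintro (h | ⟨h, h2⟩)
    · exact not_lt_bot h
    · exact ebot_lt_etop.ne' h
  · refine iff_of_false not_top_lt ?_
    rw [rhoFib_top, rhoFib_rB, rhoOff_top, rhoOff_rB]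
    rintro (h | ⟨h, h2⟩)
    · exact not_top_lt h
    · exact absurd h.symm (eCoe_ne_top _)
  · refine iff_of_false not_top_lt ?_
    rw [rhoFib_top, rhoFib_rC, rhoOff_top, rhoOff_rC]
    rintro (h | ⟨h, h2⟩)
    · exact lt_irrefl _ h
    · omega
  · refine iff_of_false not_lt_bot ?_
    rw [rhoFib_rA, rhoFib_bot, rhoOff_rA, rhoOff_bot]
    rintro (h | ⟨h, h2⟩)
    · exact not_lt_bot h
    · omega
  · exact iff_of_true (eCoe_lt_top _)
      (Or.inl (by rw [rhoFib_rA, rhoFib_top]; exact ebot_lt_etop))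
  · rw [eCoe_lt_eCoe, rA_lt_rA, rhoFib_rA, rhoFib_rA, rhoOff_rA, rhoOff_rA]
    constructor
    · intro h
      exact Or.inr ⟨rfl, by omega⟩
    · rintro (h | ⟨h, h2⟩)
      · exact absurd h (lt_irrefl _)
      · omega
  · exact iff_of_true (eCoe_lt_eCoe.2 rA_lt_rB)
      (Or.inl (by rw [rhoFib_rA, rhoFib_rB]; exact bot_lt_eCoe _))
  · exact iff_of_true (eCoe_lt_eCoe.2 rA_lt_rC)
      (Or.inl (by rw [rhoFib_rA, rhoFib_rC]; exact ebot_lt_etop))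
  · refine iff_of_false not_lt_bot ?_
    rw [rhoFib_rB, rhoFib_bot]
    rintro (h | ⟨h, h2⟩)
    · exact not_lt_bot h
    · exact absurd h (eCoe_ne_bot _)
  · exact iff_of_true (eCoe_lt_top _)
      (Or.inl (by rw [rhoFib_rB, rhoFib_top]; exact eCoe_lt_top _))
  · refine iff_of_false (fun h => rA_lt_rB.asymm (eCoe_lt_eCoe.1 h)) ?_
    rw [rhoFib_rB, rhoFib_rA]
    rintro (h | ⟨h, h2⟩)
    · exact not_lt_bot h
    · exact eCoe_ne_bot _ h
  · rw [eCoe_lt_eCoe, rB_lt_rB, rhoFib_rB, rhoFib_rB, rhoOff_rB, rhoOff_rB]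
    constructor
    · rintro (h | ⟨h, h2⟩)
      · exact Or.inl (eCoe_lt_eCoe.2 h)
      · exact Or.inr ⟨by rw [h], h2⟩
    · rintro (h | ⟨h, h2⟩)
      · exact Or.inl (eCoe_lt_eCoe.1 h)
      · exact Or.inr ⟨eCoe_eq_eCoe.1 h, h2⟩
  · exact iff_of_true (eCoe_lt_eCoe.2 rB_lt_rC)
      (Or.inl (by rw [rhoFib_rB, rhoFib_rC]; exact eCoe_lt_top _))
  · refine iff_of_false not_lt_bot ?_
    rw [rhoFib_rC, rhoFib_bot]
    rintro (h | ⟨h, h2⟩)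
    · exact not_lt_bot h
    · exact ebot_lt_etop.ne' h
  · exact iff_of_true (eCoe_lt_top _)
      (Or.inr ⟨by rw [rhoFib_rC, rhoFib_top], by rw [rhoOff_rC, rhoOff_top]; omega⟩)
  · refine iff_of_false (fun h => rA_lt_rC.asymm (eCoe_lt_eCoe.1 h)) ?_
    rw [rhoFib_rC, rhoFib_rA]
    rintro (h | ⟨h, h2⟩)
    · exact not_lt_bot h
    · exact ebot_lt_etop.ne' h
  · refine iff_of_false (fun h => rB_lt_rC.asymm (eCoe_lt_eCoe.1 h)) ?_
    rw [rhoFib_rC, rhoFib_rB]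
    rintro (h | ⟨h, h2⟩)
    · exact not_top_lt h
    · exact eCoe_ne_top _ h.symm
  · rw [eCoe_lt_eCoe, rC_lt_rC, rhoFib_rC, rhoFib_rC, rhoOff_rC, rhoOff_rC]
    constructor
    · intro h
      exact Or.inr ⟨rfl, by omega⟩
    · rintro (h | ⟨h, h2⟩)
      · exact absurd h (lt_irrefl _)
      · omega

lemma rhoFib_bot_off (e : EInd Rho) (h : rhoFib e = ⊥) : -1 ≤ rhoOff e := by
  rcases eind_rho_cases e with rfl | rfl | ⟨k, rfl⟩ | ⟨q, z, rfl⟩ | ⟨k, rfl⟩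
  · rw [rhoOff_bot]
  · exact absurd h (by rw [rhoFib_top]; exact ebot_lt_etop.ne')
  · rw [rhoOff_rA]; omega
  · exact absurd h (by rw [rhoFib_rB]; exact eCoe_ne_bot _)
  · exact absurd h (by rw [rhoFib_rC]; exact ebot_lt_etop.ne')

lemma rhoFib_top_off (e : EInd Rho) (h : rhoFib e = ⊤) : rhoOff e ≤ 1 := by
  rcases eind_rho_cases e with rfl | rfl | ⟨k, rfl⟩ | ⟨q, z, rfl⟩ | ⟨k, rfl⟩
  · exact absurd h (by rw [rhoFib_bot]; exact ebot_lt_etop.ne)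
  · rw [rhoOff_top]
  · exact absurd h (by rw [rhoFib_rA]; exact ebot_lt_etop.ne)
  · exact absurd h (by rw [rhoFib_rB]; exact eCoe_ne_top _)
  · rw [rhoOff_rC]; omega

lemma rho_realize (f : EInd ℚ) (o : ℤ) (hb : f = ⊥ → 0 ≤ o) (ht : f = ⊤ → o ≤ 0) :
    ∃ c : Rho, rhoFib (eCoe c) = f ∧ rhoOff (eCoe c) = o := by
  rcases eind_cases f with rfl | rfl | ⟨q, rfl⟩
  · refine ⟨rA o.toNat, rhoFib_rA _, ?_⟩
    rw [rhoOff_rA]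
    have := hb rfl
    omega
  · refine ⟨rC (-o).toNat, rhoFib_rC _, ?_⟩
    rw [rhoOff_rC]
    have := ht rfl
    omega
  · exact ⟨rB q o, rhoFib_rB q o, rhoOff_rB q o⟩

lemma rho_realU (e e' : EInd Rho) (hlt : e < e') (o : ℤ) (ho1 : rhoOff e < o)
    (ho2 : rhoFib e = rhoFib e' → o < rhoOff e') :
    ∃ c : Rho, rhoFib (eCoe c) = rhoFib e ∧ rhoOff (eCoe c) = o := by
  apply rho_realize (rhoFib e) o
  · intro h
    have := rhoFib_bot_off e h
    omega
  · intro h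
    have hle : rhoFib e ≤ rhoFib e' := by
      rcases (rho_char e e').1 hlt with h1 | h1
      · exact h1.le
      · exact h1.1.le
    have hf' : rhoFib e' = ⊤ := top_le_iff.1 (h ▸ hle)
    have h2 := rhoFib_top_off e' hf'
    have h3 := ho2 (by rw [h, hf'])
    omega

lemma rho_realD (e e' : EInd Rho) (hlt : e < e') (o : ℤ) (ho1 : o < rhoOff e')
    (ho2 : rhoFib e = rhoFib e' → rhoOff e < o) :
    ∃ c : Rho, rhoFib (eCoe c) = rhoFib e' ∧ rhoOff (eCoe c) = o := by
  apply rho_realize (rhoFib e') o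
  · intro h
    have hle : rhoFib e ≤ rhoFib e' := by
      rcases (rho_char e e').1 hlt with h1 | h1
      · exact h1.le
      · exact h1.1.le
    have hf : rhoFib e = ⊥ := le_bot_iff.1 (h ▸ hle)
    have h2 := rhoFib_bot_off e hf
    have h3 := ho2 (by rw [h, hf])
    omega
  · intro h
    have h2 := rhoFib_top_off e' h
    omega

/-- The gap structure on `ρ`. -/
noncomputable def rhoGap : GapStruct Rho :=
  mkGap rhoFib rhoOff rho_char rho_realU rho_realD

lemma rhoGap_bot_top : rhoGap.D ⊥ ⊤ = ⊤ := by
  show fibDist rhoFib rhoOff ⊥ ⊤ = ⊤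
  unfold fibDist
  rw [if_neg]
  rw [rhoFib_bot, rhoFib_top]
  exact ebot_lt_etop.ne

end RhoGap
/-- Lemma on exponentiation: if `F` is suc-stable with quantifier depth
bounded by `n` and Duplicator wins the `F`-game on `(u, v)`, then for every
`m ≥ 2^(n+1) - 1` Duplicator wins the `F`-games on `(u^m, v^ρ)` and on `(u^ρ, v^m)`. -/
theorem statement_3 (F : Set FOForm) (hF : IsFragment F) (hsuc : SucStable F)
    (n : ℕ) (hqd : QDBoundedBy F n) (u v : GWord)
    (hwin : DuplicatorWinsGame F u v) (m : ℕ) (hm : 2 ^ (n + 1) - 1 ≤ m) :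
    DuplicatorWinsGame F (u.pow (Fin m)) (v.pow Rho) ∧
      DuplicatorWinsGame F (u.pow Rho) (v.pow (Fin m)) := by
  obtain ⟨Good₀, hmem₀, hsafe₀⟩ := hwin
  have hp : 1 ≤ 2 ^ (n + 1) := Nat.one_le_two_pow
  have hm1 : 2 ^ (n + 1) ≤ m + 1 := by omega
  have hFin : ((2 ^ (n + 1) : ℕ) : Dist) ≤ (finGap m).D ⊥ ⊤ := by
    rw [finGap_bot_top]
    exact_mod_cast hm1
  have hRho : ((2 ^ (n + 1) : ℕ) : Dist) ≤ rhoGap.D ⊥ ⊤ := by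
    rw [rhoGap_bot_top]
    exact le_top
  exact ⟨core_win F hsuc n hqd u v Good₀ hsafe₀ hmem₀ (finGap m) rhoGap hFin hRho,
    core_win F hsuc n hqd u v Good₀ hsafe₀ hmem₀ rhoGap (finGap m) hRho hFin⟩

end EFGames
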